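/- arXiv:1004.4800 — 6 statements merged into one kernel-verified Lean document; each statement's English description precedes it below -/
import Mathlib

section
/- For every A in SL(2,R), log((‖A‖ + ‖A‖⁻¹)/2) equals the average over p in the projective line (with normalized Haar measure) of log‖A v_p‖. -/
open Real MeasureTheory intervalIntegral Matrix Polynomial

noncomputable section

/-- 2×2 real matrices. -/
abbrev Mat := Matrix (Fin 2) (Fin 2) ℝ

/-- The unit vector `v_p = (cos p, sin p)` spanning the line `ℓ_p ∈ P¹ = ℝ/πℤ`. -/
def vec (p : ℝ) : Fin 2 → ℝ := ![Real.cos p, Real.sin p]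

/-- Euclidean norm on ℝ². -/
def en (w : Fin 2 → ℝ) : ℝ := Real.sqrt (w 0 ^ 2 + w 1 ^ 2)

/-- Rotation matrix by angle θ. -/
def Rot (θ : ℝ) : Mat := !![Real.cos θ, -Real.sin θ; Real.sin θ, Real.cos θ]

/-- `parr w q` : the vector `w` is parallel to `v_q` (i.e. `w ∈ ℓ_q`). -/
def parr (w : Fin 2 → ℝ) (q : ℝ) : Prop := w 0 * Real.sin q - w 1 * Real.cos q = 0

/-- `IsLift A Φ` : `Φ : ℝ → ℝ` is a lift (mod π) of the projective action `Φ_A` of `A` on P¹. -/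
def IsLift (A : Mat) (Φ : ℝ → ℝ) : Prop := ∀ p : ℝ, parr (A.mulVec (vec p)) (Φ p)

/-- Operator (Euclidean) norm of a 2×2 matrix: sup of `‖A v_p‖` over the unit circle. -/
def opN (A : Mat) : ℝ := ⨆ p : ℝ, en (A.mulVec (vec p))

/-- Spectral radius of a real 2×2 matrix: the largest modulus of its complex eigenvalues. -/
def spectralRad (B : Mat) : ℝ :=
  sSup {x : ℝ | ∃ z : ℂ, (B.charpoly.map (algebraMap ℝ ℂ)).IsRoot z ∧ x = ‖z‖}

/-- The word product `R_θ A = (R_θ A₁)⋯(R_θ Aₙ)` of a list of matrices. -/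
def Wp (θ : ℝ) (l : List Mat) : Mat := (l.map fun B => Rot θ * B).prod

def Ie (e : ℝ) : ℝ := ∫ u in (0:ℝ)..(2*π), Real.log (1 + e^2 - 2*e*Real.cos u)

lemma qpos {e : ℝ} (he : |e| < 1) (u : ℝ) : 0 < 1 + e^2 - 2*e*Real.cos u := by
  have h1 : 2*e*Real.cos u ≤ 2*|e| := by
    calc 2*e*Real.cos u ≤ |2*e*Real.cos u| := le_abs_self _
    _ = 2 * |e| * |Real.cos u| := by rw [abs_mul, abs_mul]; simp
    _ ≤ 2 * |e| * 1 := by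
        have := Real.abs_cos_le_one u
        nlinarith [abs_nonneg e]
    _ = 2 * |e| := by ring
  have h2 : (0:ℝ) < (1 - |e|)^2 := pow_pos (by linarith) 2
  nlinarith [sq_abs e]

lemma qcont (e : ℝ) : Continuous fun u => 1 + e^2 - 2*e*Real.cos u := by
  continuity

lemma lcont {e : ℝ} (he : |e| < 1) :
    Continuous fun u => Real.log (1 + e^2 - 2*e*Real.cos u) :=
  (qcont e).log fun u => (qpos he u).ne'

lemma lper (e : ℝ) :
    Function.Periodic (fun u => Real.log (1 + e^2 - 2*e*Real.cos u)) (2*π) := by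
  intro u; simp [Real.cos_add_two_pi]

lemma lint {e : ℝ} (he : |e| < 1) (a b : ℝ) :
    IntervalIntegrable (fun u => Real.log (1 + e^2 - 2*e*Real.cos u)) volume a b :=
  (lcont he).intervalIntegrable a b

lemma Ie_neg (e : ℝ) : Ie (-e) = Ie e := by
  have h1 : Ie (-e) = ∫ u in (0:ℝ)..(2*π),
      (fun x => Real.log (1 + e^2 - 2*e*Real.cos x)) (u + π) := by
    unfold Ie
    congr 1; funext u
    simp only [Real.cos_add_pi, neg_sq]
    ring_nf
  rw [h1, intervalIntegral.integral_comp_add_right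
      (fun u => Real.log (1 + e^2 - 2*e*Real.cos u)) π]
  have h2 := (lper e).intervalIntegral_add_eq π 0
  rw [zero_add] at h2
  have e3 : (2*π + π : ℝ) = π + 2*π := by ring
  rw [zero_add, e3, h2]
  rfl

lemma Ie_sq {e : ℝ} (he : |e| < 1) : Ie e + Ie e = Ie (e^2) := by
  have hneg : |(-e)| < 1 := by rwa [abs_neg]
  have key : ∀ u : ℝ, Real.log (1+e^2-2*e*Real.cos u) + Real.log (1+(-e)^2-2*(-e)*Real.cos u)
      = (fun x => Real.log (1+(e^2)^2 - 2*(e^2)*Real.cos x)) (2*u) := by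
    intro u
    simp only
    rw [← Real.log_mul (qpos he u).ne' (qpos hneg u).ne']
    congr 1
    have hc := Real.cos_sq u
    nlinarith [hc]
  calc Ie e + Ie e = Ie e + Ie (-e) := by rw [Ie_neg]
  _ = ∫ u in (0:ℝ)..2*π, (Real.log (1+e^2-2*e*Real.cos u)
        + Real.log (1+(-e)^2-2*(-e)*Real.cos u)) := by
      unfold Ie
      rw [intervalIntegral.integral_add (lint he 0 (2*π)) (lint hneg 0 (2*π))]
  _ = ∫ u in (0:ℝ)..2*π, (fun x => Real.log (1+(e^2)^2 - 2*(e^2)*Real.cos x)) (2*u) := by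
      congr 1; funext u; exact key u
  _ = Ie (e^2) := by
      have he2 : |e^2| < 1 := by
        rw [abs_pow]; exact pow_lt_one₀ (abs_nonneg e) he two_ne_zero
      rw [intervalIntegral.integral_comp_mul_left
        (fun x => Real.log (1+(e^2)^2 - 2*(e^2)*Real.cos x)) (two_ne_zero)]
      have hsplit : (∫ x in (2*(0:ℝ))..(2*(2*π)), Real.log (1+(e^2)^2 - 2*(e^2)*Real.cos x))
          = (∫ x in (0:ℝ)..(2*π), Real.log (1+(e^2)^2 - 2*(e^2)*Real.cos x))
            + ∫ x in (2*π:ℝ)..(2*(2*π)), Real.log (1+(e^2)^2 - 2*(e^2)*Real.cos x) := by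
        rw [mul_zero]
        exact (intervalIntegral.integral_add_adjacent_intervals
          (lint he2 0 (2*π)) (lint he2 (2*π) (2*(2*π)))).symm
      have hper : (∫ x in (2*π:ℝ)..(2*(2*π)), Real.log (1+(e^2)^2 - 2*(e^2)*Real.cos x))
          = ∫ x in (0:ℝ)..(2*π), Real.log (1+(e^2)^2 - 2*(e^2)*Real.cos x) := by
        have h2 := (lper (e^2)).intervalIntegral_add_eq (2*π) 0
        rw [zero_add] at h2
        have e3 : (2*(2*π) : ℝ) = 2*π + 2*π := by ring
        rw [e3, h2]
      rw [hsplit, hper]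
      unfold Ie
      simp only [smul_eq_mul]
      ring

lemma Ie_iter {e : ℝ} (he : |e| < 1) : ∀ n : ℕ, Ie e = Ie (e^(2^n)) / 2^n := by
  intro n
  induction n with
  | zero => simp
  | succ n ih =>
    have habs : |e^(2^n)| < 1 := by
      rw [abs_pow]
      exact pow_lt_one₀ (abs_nonneg e) he (by positivity : 0 < 2^n).ne'
    have hfe := Ie_sq habs
    rw [← pow_mul, ← pow_succ] at hfe
    rw [ih, ← hfe, pow_succ]
    ring

lemma abs2cos (f u : ℝ) : |2*f*Real.cos u| ≤ 2*|f| := by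
  rw [abs_mul, abs_mul]
  have h1 := Real.abs_cos_le_one u
  have h2 : |(2:ℝ)| = 2 := by norm_num
  rw [h2]
  nlinarith [abs_nonneg f]

lemma Ie_abs_le {e : ℝ} (he : |e| < 1) {f : ℝ} (hf : |f| ≤ |e|) :
    |Ie f| ≤ (Real.log 4 - Real.log ((1-|e|)^2)) * (2*π) := by
  set C := Real.log 4 - Real.log ((1-|e|)^2) with hC
  have hflt : |f| < 1 := lt_of_le_of_lt hf he
  have h1e : 0 < 1 - |e| := by linarith
  have hCbound : ∀ u : ℝ, |Real.log (1 + f^2 - 2*f*Real.cos u)| ≤ C := by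
    intro u
    have hcos := abs_le.mp (abs2cos f u)
    have hx0 : 0 < 1 + f^2 - 2*f*Real.cos u := qpos hflt u
    have hxle : 1 + f^2 - 2*f*Real.cos u ≤ 4 := by
      nlinarith [sq_abs f, abs_nonneg f]
    have hxge : (1-|e|)^2 ≤ 1 + f^2 - 2*f*Real.cos u := by
      nlinarith [sq_abs f, abs_nonneg f]
    have hlogsq : Real.log ((1-|e|)^2) ≤ 0 :=
      Real.log_nonpos (by positivity) (by nlinarith [abs_nonneg e])
    have hlog4 : (0:ℝ) ≤ Real.log 4 := Real.log_nonneg (by norm_num)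
    rcases le_or_gt 0 (Real.log (1 + f^2 - 2*f*Real.cos u)) with h | h
    · rw [abs_of_nonneg h]
      have := Real.log_le_log hx0 hxle
      linarith
    · rw [abs_of_neg h]
      have := Real.log_le_log (by positivity) hxge
      linarith
  have hb := intervalIntegral.norm_integral_le_of_norm_le_const (a := (0:ℝ)) (b := 2*π)
    (C := C) (f := fun u => Real.log (1 + f^2 - 2*f*Real.cos u))
    (fun u _ => by rw [Real.norm_eq_abs]; exact hCbound u)
  have hππ : |2*π - 0| = 2*π := by
    rw [sub_zero, abs_of_nonneg (by positivity)]
  rw [hππ] at hb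
  exact hb

lemma Ie_zero {e : ℝ} (he : |e| < 1) : Ie e = 0 := by
  set C := (Real.log 4 - Real.log ((1-|e|)^2)) * (2*π) with hC
  have hb : ∀ n : ℕ, |Ie e| ≤ C / 2^n := by
    intro n
    have habs : |e^(2^n)| ≤ |e| := by
      rw [abs_pow]
      exact pow_le_of_le_one (abs_nonneg e) he.le (by positivity : 0 < 2^n).ne'
    have hble := Ie_abs_le he habs
    rw [Ie_iter he n, abs_div]
    have h2 : |(2:ℝ)^n| = 2^n := abs_of_pos (by positivity)
    rw [h2]
    gcongr
  have htend : Filter.Tendsto (fun n : ℕ => C / 2^n) Filter.atTop (nhds 0) := by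
    have h := tendsto_pow_atTop_nhds_zero_of_lt_one (le_of_lt one_half_pos)
      (by norm_num : (1:ℝ)/2 < 1)
    have h2 := h.const_mul C
    simp only [mul_zero] at h2
    simpa [div_eq_mul_inv, one_div, inv_pow] using h2
  have hle : |Ie e| ≤ 0 := ge_of_tendsto htend (Filter.Eventually.of_forall hb)
  exact abs_eq_zero.mp (le_antisymm hle (abs_nonneg _))

lemma key_integral {t r : ℝ} (hr : 0 ≤ r) (ht : 0 < t) (htr : t^2 = r^2 + 1) :
    ∫ u in (0:ℝ)..(2*π), Real.log (t + r * Real.cos u) = 2*π * Real.log ((t+1)/2) := by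
  have ht1 : 1 ≤ t := by nlinarith
  have ht1' : 0 < t + 1 := by linarith
  set e := r/(t+1) with hE
  have he0 : 0 ≤ e := div_nonneg hr ht1'.le
  have he : |e| < 1 := by
    rw [abs_of_nonneg he0, hE, div_lt_one ht1']
    nlinarith
  have hneg : |(-e)| < 1 := by rwa [abs_neg]
  have hpt : ∀ u : ℝ, t + r * Real.cos u
      = ((t+1)/2) * (1 + (-e)^2 - 2*(-e)*Real.cos u) := by
    intro u
    rw [hE]
    field_simp
    linear_combination htr
  have hsplit : ∀ u : ℝ, Real.log (t + r*Real.cos u)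
      = Real.log ((t+1)/2) + Real.log (1 + (-e)^2 - 2*(-e)*Real.cos u) := by
    intro u
    rw [hpt u, Real.log_mul (by positivity) (qpos hneg u).ne']
  simp_rw [hsplit]
  rw [intervalIntegral.integral_add (intervalIntegrable_const) (lint hneg 0 (2*π))]
  have hz : (∫ u in (0:ℝ)..(2*π), Real.log (1 + (-e)^2 - 2*(-e)*Real.cos u)) = 0 :=
    Ie_zero hneg
  rw [hz, intervalIntegral.integral_const, smul_eq_mul, sub_zero, add_zero]


set_option maxHeartbeats 1000000 in
/-- `log((‖A‖+‖A‖⁻¹)/2)` equals the P¹-average of `log ‖A v_p‖`. -/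
theorem stmt1 (A : Mat) (hdet : A.det = 1) :
    Real.log ((opN A + (opN A)⁻¹) / 2)
      = (1 / π) * ∫ p in (-(π/2))..(π/2), Real.log (en (A.mulVec (vec p))) := by
  have hdet' : A 0 0 * A 1 1 - A 0 1 * A 1 0 = 1 := by
    rw [Matrix.det_fin_two] at hdet; exact hdet
  set uu := ((A 0 0^2 + A 1 0^2) - (A 0 1^2 + A 1 1^2))/2 with huu
  set v := A 0 0 * A 0 1 + A 1 0 * A 1 1 with hv
  set t := ((A 0 0^2 + A 1 0^2) + (A 0 1^2 + A 1 1^2))/2 with ht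
  set r := Real.sqrt (uu^2 + v^2) with hrdef
  have hr0 : 0 ≤ r := Real.sqrt_nonneg _
  have hrsq : r^2 = uu^2 + v^2 := Real.sq_sqrt (by positivity)
  have htr : t^2 = r^2 + 1 := by
    rw [hrsq, ht, huu, hv]
    linear_combination (A 0 0 * A 1 1 - A 0 1 * A 1 0 + 1) * hdet'
  have ht0 : 0 < t := by
    have htn : 0 ≤ t := by rw [ht]; positivity
    nlinarith
  have htgtr : r < t := by nlinarith
  -- phase
  obtain ⟨φ, hφc, hφs⟩ : ∃ φ, uu = r * Real.cos φ ∧ v = r * Real.sin φ := by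
    rcases eq_or_ne r 0 with h0 | h0
    · have h2 : uu^2 + v^2 = 0 := by rw [← hrsq, h0]; ring
      have h1 : uu = 0 ∧ v = 0 := by
        constructor <;> nlinarith [sq_nonneg uu, sq_nonneg v]
      exact ⟨0, by simp [h1.1, h0], by simp [h1.2, h0]⟩
    · set z : ℂ := uu + v * Complex.I with hz
      have hzre : z.re = uu := by simp [hz]
      have hzim : z.im = v := by simp [hz]
      have habs : ‖z‖ = r := by
        rw [hz, Complex.norm_add_mul_I, hrdef]
      have hzne : z ≠ 0 := by
        intro h; rw [h] at habs; simp at habs; exact h0 habs.symm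
      refine ⟨Complex.arg z, ?_, ?_⟩
      · rw [Complex.cos_arg hzne, habs, hzre]; field_simp
      · rw [Complex.sin_arg, habs, hzim]; field_simp
  -- the quadratic form
  have hQ : ∀ p : ℝ, en (A.mulVec (vec p)) = Real.sqrt (t + r * Real.cos (2*p - φ)) := by
    intro p
    have hmv0 : A.mulVec (vec p) 0 = A 0 0 * Real.cos p + A 0 1 * Real.sin p := by
      simp [Matrix.mulVec, dotProduct, _root_.vec, Fin.sum_univ_two]
    have hmv1 : A.mulVec (vec p) 1 = A 1 0 * Real.cos p + A 1 1 * Real.sin p := by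
      simp [Matrix.mulVec, dotProduct, _root_.vec, Fin.sum_univ_two]
    rw [en, hmv0, hmv1]
    congr 1
    have key : t + r * Real.cos (2*p - φ) = t + uu * Real.cos (2*p) + v * Real.sin (2*p) := by
      rw [Real.cos_sub, hφc, hφs]; ring
    rw [key, ht, huu, hv, Real.cos_two_mul, Real.sin_two_mul]
    linear_combination (A 0 1^2 + A 1 1^2) * (Real.sin_sq_add_cos_sq p)
  have hpos : ∀ x : ℝ, 0 < t + r * Real.cos x := by
    intro x
    nlinarith [Real.neg_one_le_cos x, Real.cos_le_one x]
  -- operator norm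
  have hbdd : ∀ p : ℝ, en (A.mulVec (vec p)) ≤ Real.sqrt (t + r) := by
    intro p
    rw [hQ p]
    apply Real.sqrt_le_sqrt
    nlinarith [Real.cos_le_one (2*p - φ)]
  have hop : opN A = Real.sqrt (t + r) := by
    simp only [opN]
    apply le_antisymm (ciSup_le hbdd)
    have hb : BddAbove (Set.range fun p => en (A.mulVec (vec p))) := by
      refine ⟨Real.sqrt (t + r), ?_⟩
      rintro x ⟨p, rfl⟩
      exact hbdd p
    have hval : en (A.mulVec (vec (φ/2))) = Real.sqrt (t + r) := by
      rw [hQ (φ/2)]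
      have h0 : 2*(φ/2) - φ = 0 := by ring
      rw [h0, Real.cos_zero, mul_one]
    calc Real.sqrt (t + r) = en (A.mulVec (vec (φ/2))) := hval.symm
    _ ≤ ⨆ p : ℝ, en (A.mulVec (vec p)) := le_ciSup hb (φ/2)
  -- LHS
  have hinv : (Real.sqrt (t + r))⁻¹ = Real.sqrt (t - r) := by
    rw [← Real.sqrt_inv]
    congr 1
    exact inv_eq_of_mul_eq_one_right (by nlinarith)
  have hLsq : ((Real.sqrt (t+r) + Real.sqrt (t-r))/2)^2 = (t+1)/2 := by
    have h1 : (0:ℝ) ≤ t + r := by linarith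
    have h2 : (0:ℝ) ≤ t - r := by linarith
    have h3 : (t+r)*(t-r) = 1 := by nlinarith
    rw [div_pow, add_sq, Real.sq_sqrt h1, Real.sq_sqrt h2, mul_assoc,
      ← Real.sqrt_mul h1, h3, Real.sqrt_one]
    ring
  have hL : Real.log ((opN A + (opN A)⁻¹) / 2) = Real.log ((t+1)/2) / 2 := by
    rw [hop, hinv, ← Real.log_sqrt (by positivity), ← hLsq,
      Real.sqrt_sq (by positivity)]
  rw [hL]
  -- RHS
  have hR : (∫ p in (-(π/2))..(π/2), Real.log (en (A.mulVec (vec p))))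
      = π * Real.log ((t+1)/2) / 2 := by
    have hg : ∀ p : ℝ, Real.log (en (A.mulVec (vec p)))
        = (fun y => Real.log (t + r * Real.cos (2*y)) / 2) (p - φ/2) := by
      intro p
      rw [hQ p, Real.log_sqrt (hpos _).le]
      simp only
      have h2 : 2*(p - φ/2) = 2*p - φ := by ring
      rw [h2]
    rw [intervalIntegral.integral_congr
      (g := fun p => (fun y => Real.log (t + r * Real.cos (2*y)) / 2) (p - φ/2))
      (fun p _ => hg p)]
    rw [intervalIntegral.integral_comp_sub_right
      (fun y => Real.log (t + r * Real.cos (2*y)) / 2) (φ/2)]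
    rw [intervalIntegral.integral_div]
    rw [intervalIntegral.integral_comp_mul_left
      (fun x => Real.log (t + r * Real.cos x)) two_ne_zero]
    have per : Function.Periodic (fun x => Real.log (t + r * Real.cos x)) (2*π) := by
      intro x; simp [Real.cos_add_two_pi]
    have hbound : 2*(π/2 - φ/2) = (2*(-(π/2) - φ/2)) + 2*π := by ring
    rw [hbound, per.intervalIntegral_add_eq (2*(-(π/2) - φ/2)) 0, zero_add,
      key_integral hr0 ht0 htr, smul_eq_mul]
    ring
  rw [hR]
  have hπ : (π:ℝ) ≠ 0 := Real.pi_ne_zero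
  field_simp
end
end

section
/- Let A ∈ SL(2,R) be non-orthogonal, with A = S D R its singular value decomposition (D = diag(λ, λ⁻¹), λ > 1, S, R ∈ O(2)), and M = R⁻¹ K R where K has rows (0, λ⁻¹) and (λ, 0). Then for every p ∈ P^1, log‖A v_{Φ_M(p)}‖ = −log‖A v_p‖, where v_q = (cos q, sin q). -/
open Real MeasureTheory intervalIntegral Matrix Polynomial

noncomputable section

lemma en_orth (R : Mat) (hR : Rᵀ * R = 1) (v : Fin 2 → ℝ) :
    en (R.mulVec v) = en v := by
  have h00 := congrFun (congrFun hR 0) 0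
  have h01 := congrFun (congrFun hR 0) 1
  have h11 := congrFun (congrFun hR 1) 1
  simp [Matrix.mul_apply, Fin.sum_univ_two, Matrix.one_apply, Matrix.transpose_apply] at h00 h01 h11
  unfold en
  congr 1
  simp only [Matrix.mulVec, dotProduct, Fin.sum_univ_two]
  linear_combination v 0 ^ 2 * h00 + 2 * v 0 * v 1 * h01 + v 1 ^ 2 * h11

lemma en_unit (q : ℝ) : en (vec q) = 1 := by
  simp [en, _root_.vec, Real.sin_sq_add_cos_sq, add_comm]

lemma en_smul' (c : ℝ) (w : Fin 2 → ℝ) : en (c • w) = |c| * en w := by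
  unfold en
  rw [← Real.sqrt_sq_eq_abs, ← Real.sqrt_mul (sq_nonneg c)]
  congr 1
  simp [smul_eq_mul]
  ring

/-- `ρ_A ∘ Ψ_A = -ρ_A` : `log ‖A v_{Ψ_A(p)}‖ = - log ‖A v_p‖`. -/
theorem stmt3 (A S R : Mat) (l : ℝ) (hl : 1 < l)
    (hS : Sᵀ * S = 1) (hR : Rᵀ * R = 1)
    (hA : A = S * !![l, 0; 0, l⁻¹] * R) (hdet : A.det = 1)
    (M : Mat) (hM : M = R⁻¹ * !![0, l⁻¹; l, 0] * R)
    (Ψ : ℝ → ℝ) (hΨ : IsLift M Ψ) :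
    ∀ p : ℝ, Real.log (en (A.mulVec (vec (Ψ p)))) = - Real.log (en (A.mulVec (vec p))) := by
  have hl0 : l ≠ 0 := by positivity
  have hRR : R * Rᵀ = 1 := mul_eq_one_comm.mp hR
  have hRinv : R⁻¹ = Rᵀ := Matrix.inv_eq_left_inv hR
  -- key1 : en (M w) = en (A w)
  have key1 : ∀ w : Fin 2 → ℝ, en (M.mulVec w) = en (A.mulVec w) := by
    intro w
    rw [hM, hA, hRinv]
    rw [Matrix.mul_assoc, ← Matrix.mulVec_mulVec, ← Matrix.mulVec_mulVec]
    rw [show ((S * !![l, 0; 0, l⁻¹] * R) : Mat) = S * (!![l, 0; 0, l⁻¹] * R) from Matrix.mul_assoc _ _ _,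
      ← Matrix.mulVec_mulVec, ← Matrix.mulVec_mulVec]
    rw [en_orth Rᵀ (by rw [Matrix.transpose_transpose]; exact hRR),
      en_orth S hS]
    set u := R.mulVec w
    unfold en
    congr 1
    simp [Matrix.mulVec, dotProduct, Fin.sum_univ_two]
    ring
  -- key2 : en (A (M w)) = en w
  have hAM : A * M = S * !![(0:ℝ),1;1,0] * R := by
    rw [hA, hM, hRinv]
    have : !![l, 0; 0, l⁻¹] * (R * (Rᵀ * (!![0, l⁻¹; l, 0] * R)))
        = !![(0:ℝ),1;1,0] * R := by
      rw [← Matrix.mul_assoc R Rᵀ, hRR, Matrix.one_mul, ← Matrix.mul_assoc]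
      congr 1
      rw [Matrix.mul_fin_two]
      norm_num [mul_inv_cancel₀ hl0, inv_mul_cancel₀ hl0]
    calc S * !![l, 0; 0, l⁻¹] * R * (Rᵀ * !![0, l⁻¹; l, 0] * R)
        = S * (!![l, 0; 0, l⁻¹] * (R * (Rᵀ * (!![0, l⁻¹; l, 0] * R)))) := by
          simp only [Matrix.mul_assoc]
      _ = S * (!![(0:ℝ),1;1,0] * R) := by rw [this]
      _ = S * !![(0:ℝ),1;1,0] * R := by rw [Matrix.mul_assoc]
  have key2 : ∀ w : Fin 2 → ℝ, en (A.mulVec (M.mulVec w)) = en w := by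
    intro w
    rw [Matrix.mulVec_mulVec, hAM, ← Matrix.mulVec_mulVec, ← Matrix.mulVec_mulVec,
      en_orth S hS]
    rw [show en (Matrix.mulVec !![(0:ℝ),1;1,0] (R.mulVec w)) = en (R.mulVec w) by
      unfold en; congr 1
      simp [Matrix.mulVec, dotProduct, Fin.sum_univ_two]; ring]
    exact en_orth R hR w
  intro p
  set q := Ψ p with hq
  set w := M.mulVec (vec p) with hwdef
  have hpar : w 0 * Real.sin q - w 1 * Real.cos q = 0 := hΨ p
  set c := w 0 * Real.cos q + w 1 * Real.sin q with hc
  have hpyth := Real.sin_sq_add_cos_sq q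
  have h0 : w 0 = c * Real.cos q := by rw [hc]; linear_combination Real.sin q * hpar - w 0 * hpyth
  have h1' : w 1 = c * Real.sin q := by
    rw [hc]; linear_combination (-Real.cos q) * hpar - w 1 * hpyth
  have hw : w = c • vec q := by
    funext i
    fin_cases i
    · show w 0 = c * Real.cos q; exact h0
    · show w 1 = c * Real.sin q; exact h1'
  have hAw : en (A.mulVec w) = |c| * en (A.mulVec (vec q)) := by
    rw [hw, Matrix.mulVec_smul, en_smul']
  have h1 : en (A.mulVec w) = 1 := by
    rw [hwdef, key2, en_unit]
  have hcA : |c| = en (A.mulVec (vec p)) := by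
    have : en w = |c| := by rw [hw, en_smul', en_unit, mul_one]
    rw [← this, hwdef, key1]
  have hc0 : |c| ≠ 0 := by
    intro h
    rw [h, zero_mul] at hAw
    rw [hAw] at h1
    norm_num at h1
  have hmain : en (A.mulVec (vec q)) = (en (A.mulVec (vec p)))⁻¹ := by
    rw [← hcA]
    field_simp at hAw ⊢
    rw [← h1, hAw]
  rw [hmain, Real.log_inv]
end
end

section
/- Let A ∈ SL(2,R) be non-orthogonal, define H_A(p) = p − Φ_A(p) on P^1, and let Ψ_A = Φ_M be the involution from the singular value decomposition. Then H_A ∘ Ψ_A = H_A. -/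
open Real MeasureTheory intervalIntegral Matrix Polynomial

noncomputable section

lemma parr_decomp {w : Fin 2 → ℝ} {q : ℝ} (h : parr w q) :
    ∃ s : ℝ, w 0 = s * Real.cos q ∧ w 1 = s * Real.sin q := by
  have hp := Real.sin_sq_add_cos_sq q
  unfold parr at h
  refine ⟨w 0 * Real.cos q + w 1 * Real.sin q, ?_, ?_⟩
  · linear_combination Real.sin q * h - w 0 * hp
  · linear_combination (-Real.cos q) * h - w 1 * hp

/-- `H_A ∘ Ψ_A = H_A` on P¹, where `H_A(p) = p - Φ_A(p)`. -/
theorem stmt5 (A S R : Mat) (l : ℝ) (hl : 1 < l)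
    (hS : Sᵀ * S = 1) (hR : Rᵀ * R = 1)
    (hA : A = S * !![l, 0; 0, l⁻¹] * R) (hdet : A.det = 1)
    (M : Mat) (hM : M = R⁻¹ * !![0, l⁻¹; l, 0] * R)
    (Ψ : ℝ → ℝ) (hΨ : IsLift M Ψ) (hΨc : Continuous Ψ)
    (Φ : ℝ → ℝ) (hΦ : IsLift A Φ) (hΦc : Continuous Φ) :
    ∀ p : ℝ, ∃ k : ℤ, Ψ p - Φ (Ψ p) = (p - Φ p) + k * π := by
  have hl0 : l ≠ 0 := by linarith
  have hRinv : R⁻¹ = Rᵀ := Matrix.inv_eq_left_inv hR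
  have hRR : R * Rᵀ = 1 := mul_eq_one_comm.mp hR
  rw [hRinv] at hM
  have cancelR : ∀ X : Mat, R * (Rᵀ * X) = X := fun X => by
    rw [← Matrix.mul_assoc, hRR, Matrix.one_mul]
  have cancelS : ∀ X : Mat, Sᵀ * (S * X) = X := fun X => by
    rw [← Matrix.mul_assoc, hS, Matrix.one_mul]
  set J : Mat := !![0, 1; 1, 0] with hJ
  have hJJ : ∀ X : Mat, J * (J * X) = X := fun X => by
    rw [← Matrix.mul_assoc]
    have h1 : J * J = 1 := by
      ext i j; fin_cases i <;> fin_cases j <;>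
        simp [hJ, Matrix.mul_apply, Fin.sum_univ_two, Matrix.one_apply]
    rw [h1, Matrix.one_mul]
  have hJt : Jᵀ = J := by
    ext i j; fin_cases i <;> fin_cases j <;> simp [hJ]
  have hDN : (!![l, 0; 0, l⁻¹] : Mat) * !![0, l⁻¹; l, 0] = J := by
    ext i j; fin_cases i <;> fin_cases j <;>
      simp [hJ, Matrix.mul_apply, Fin.sum_univ_two, hl0]
  have hAM : A * M = S * (J * R) := by
    rw [hA, hM]
    calc S * !![l, 0; 0, l⁻¹] * R * (Rᵀ * !![0, l⁻¹; l, 0] * R)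
        = S * (!![l, 0; 0, l⁻¹] * (R * (Rᵀ * (!![0, l⁻¹; l, 0] * R)))) := by
          simp only [Matrix.mul_assoc]
      _ = S * (!![l, 0; 0, l⁻¹] * (!![0, l⁻¹; l, 0] * R)) := by rw [cancelR]
      _ = S * (J * R) := by rw [← Matrix.mul_assoc !![l, 0; 0, l⁻¹], hDN]
  have hBo : (A * M)ᵀ * (A * M) = 1 := by
    rw [hAM]
    calc (S * (J * R))ᵀ * (S * (J * R))
        = Rᵀ * (Jᵀ * (Sᵀ * (S * (J * R)))) := by
          simp only [Matrix.transpose_mul, Matrix.mul_assoc]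
      _ = 1 := by rw [cancelS, hJt, hJJ, hR]
  have hdR : R.det * R.det = 1 := by
    have h := congrArg Matrix.det hR
    simpa [Matrix.det_mul, Matrix.det_transpose] using h
  have hdetM : M.det = -1 := by
    rw [hM, Matrix.det_mul, Matrix.det_mul, Matrix.det_transpose, Matrix.det_fin_two_of]
    have h2 : (0:ℝ) * 0 - l⁻¹ * l = -1 := by
      rw [inv_mul_cancel₀ hl0]; ring
    rw [h2]; linear_combination -hdR
  have hdetB : (A * M).det = -1 := by
    rw [Matrix.det_mul, hdet, hdetM, one_mul]
  obtain ⟨B, hBdef⟩ : ∃ B : Mat, A * M = B := ⟨_, rfl⟩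
  rw [hBdef] at hBo hdetB
  obtain ⟨a, c, hBform, e00⟩ :
      ∃ a c : ℝ, B = !![a, c; c, -a] ∧ a * a + c * c = 1 := by
    have e00 : B 0 0 * B 0 0 + B 1 0 * B 1 0 = 1 := by
      have h := congrFun (congrFun hBo 0) 0
      simpa [Matrix.mul_apply, Fin.sum_univ_two, Matrix.transpose_apply,
        Matrix.one_apply] using h
    have e01 : B 0 0 * B 0 1 + B 1 0 * B 1 1 = 0 := by
      have h := congrFun (congrFun hBo 0) 1
      simpa [Matrix.mul_apply, Fin.sum_univ_two, Matrix.transpose_apply,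
        Matrix.one_apply] using h
    have edet : B 0 0 * B 1 1 - B 0 1 * B 1 0 = -1 := by
      rw [← Matrix.det_fin_two]; exact hdetB
    set a := B 0 0 with ha
    set b := B 0 1 with hbdef
    set c := B 1 0 with hcdef
    set d := B 1 1 with hddef
    have hb : b = c := by linear_combination a * e01 - c * edet - b * e00
    have h1 : c * (a + d) = 0 := by linear_combination e01 - a * hb
    have h2 : a * (a + d) = 0 := by linear_combination edet + e00 + c * hb
    have hd : d = -a := by linear_combination a * h2 + c * h1 - (a + d) * e00
    refine ⟨a, c, ?_, e00⟩
    ext i j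
    fin_cases i <;> fin_cases j <;>
      simp [← ha, ← hbdef, ← hcdef, ← hddef, hb, hd]
  rw [← hBdef] at hBform
  have hBsym : (A * M)ᵀ = A * M := by
    rw [hBform]; ext i j; fin_cases i <;> fin_cases j <;> simp
  have hBB : (A * M) * (A * M) = 1 := by
    rw [← hBdef] at hBo; rw [← hBo, hBsym]
  have hMM : M * M = 1 := by
    rw [hM]
    have hNN : (!![0, l⁻¹; l, 0] : Mat) * !![0, l⁻¹; l, 0] = 1 := by
      ext i j; fin_cases i <;> fin_cases j <;>
        simp [Matrix.mul_apply, Fin.sum_univ_two, Matrix.one_apply, hl0]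
    calc Rᵀ * !![0, l⁻¹; l, 0] * R * (Rᵀ * !![0, l⁻¹; l, 0] * R)
        = Rᵀ * (!![0, l⁻¹; l, 0] * (R * (Rᵀ * (!![0, l⁻¹; l, 0] * R)))) := by
          simp only [Matrix.mul_assoc]
      _ = Rᵀ * (!![0, l⁻¹; l, 0] * (!![0, l⁻¹; l, 0] * R)) := by rw [cancelR]
      _ = Rᵀ * R := by rw [← Matrix.mul_assoc !![0, l⁻¹; l, 0], hNN, Matrix.one_mul]
      _ = 1 := hR
  have hAMA : (A * M) * A = M := by
    have h1 : (A*M) * A * (M*M) = ((A*M) * (A*M)) * M := by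
      simp only [Matrix.mul_assoc]
    rw [hMM, Matrix.mul_one] at h1
    rw [h1, hBB, Matrix.one_mul]
  -- pointwise part
  intro p
  obtain ⟨s, hm0, hm1⟩ := parr_decomp (hΨ p)
  obtain ⟨t, ht0, ht1⟩ := parr_decomp (hΦ p)
  obtain ⟨u, hu0, hu1⟩ := parr_decomp (hΦ (Ψ p))
  have hw1 : M.mulVec (vec p) = s • vec (Ψ p) := by
    funext i; fin_cases i
    · simpa [_root_.vec] using hm0
    · simpa [_root_.vec] using hm1
  have hw2 : A.mulVec (vec p) = t • vec (Φ p) := by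
    funext i; fin_cases i
    · simpa [_root_.vec] using ht0
    · simpa [_root_.vec] using ht1
  have hw3 : A.mulVec (vec (Ψ p)) = u • vec (Φ (Ψ p)) := by
    funext i; fin_cases i
    · simpa [_root_.vec] using hu0
    · simpa [_root_.vec] using hu1
  have E12 : (A * M).mulVec (vec p) = (s * u) • vec (Φ (Ψ p)) := by
    rw [← Matrix.mulVec_mulVec, hw1, Matrix.mulVec_smul, hw3, smul_smul]
  have E34 : (A * M).mulVec (t • vec (Φ p)) = s • vec (Ψ p) := by
    rw [← hw2, Matrix.mulVec_mulVec, hAMA, hw1]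
  have E1 : a * Real.cos p + c * Real.sin p = (s * u) * Real.cos (Φ (Ψ p)) := by
    have h := congrFun E12 0
    rw [hBform] at h
    simpa [Matrix.mulVec, dotProduct, Fin.sum_univ_two, _root_.vec] using h
  have E2 : c * Real.cos p - a * Real.sin p = (s * u) * Real.sin (Φ (Ψ p)) := by
    have h := congrFun E12 1
    rw [hBform] at h
    have h' : c * Real.cos p + -a * Real.sin p = (s * u) * Real.sin (Φ (Ψ p)) := by
      simpa [Matrix.mulVec, dotProduct, Fin.sum_univ_two, _root_.vec] using h
    linear_combination h'
  have E3 : t * (a * Real.cos (Φ p) + c * Real.sin (Φ p)) = s * Real.cos (Ψ p) := by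
    have h := congrFun E34 0
    rw [hBform] at h
    have h' := h
    simp [Matrix.mulVec, dotProduct, Fin.sum_univ_two, _root_.vec, smul_eq_mul] at h'
    linear_combination h'
  have E4 : t * (c * Real.cos (Φ p) - a * Real.sin (Φ p)) = s * Real.sin (Ψ p) := by
    have h := congrFun E34 1
    rw [hBform] at h
    have h' := h
    simp [Matrix.mulVec, dotProduct, Fin.sum_univ_two, _root_.vec, smul_eq_mul] at h'
    linear_combination h'
  have pyth := Real.sin_sq_add_cos_sq
  have hsu : (s * u) * (s * u) = 1 := by
    linear_combination (-(a * Real.cos p + c * Real.sin p + (s*u) * Real.cos (Φ (Ψ p)))) * E1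
      + (-(c * Real.cos p - a * Real.sin p + (s*u) * Real.sin (Φ (Ψ p)))) * E2
      + (Real.cos p ^ 2 + Real.sin p ^ 2) * e00 + pyth p - (s*u)^2 * pyth (Φ (Ψ p))
  have hsu0 : s * u ≠ 0 := by
    intro h; rw [h] at hsu; norm_num at hsu
  have hs0 : s ≠ 0 := fun h => hsu0 (by rw [h, zero_mul])
  have hX1 : s * Real.sin (Ψ p + Φ p) = t * c := by
    rw [Real.sin_add]
    linear_combination (-Real.cos (Φ p)) * E4 - Real.sin (Φ p) * E3 + t * c * pyth (Φ p)
  have hX2 : s * Real.cos (Ψ p + Φ p) = t * a := by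
    rw [Real.cos_add]
    linear_combination (-Real.cos (Φ p)) * E3 + Real.sin (Φ p) * E4 + t * a * pyth (Φ p)
  have hY1 : (s * u) * Real.sin (Φ (Ψ p) + p) = c := by
    rw [Real.sin_add]
    linear_combination (-Real.cos p) * E2 - Real.sin p * E1 + c * pyth p
  have hY2 : (s * u) * Real.cos (Φ (Ψ p) + p) = a := by
    rw [Real.cos_add]
    linear_combination (-Real.cos p) * E1 + Real.sin p * E2 + a * pyth p
  have hzero : (s * (s * u)) * Real.sin ((Ψ p + Φ p) - (Φ (Ψ p) + p)) = 0 := by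
    rw [Real.sin_sub]
    linear_combination (s * u * Real.cos (Φ (Ψ p) + p)) * hX1 + (t * c) * hY2
      - (s * u * Real.sin (Φ (Ψ p) + p)) * hX2 - (t * a) * hY1
  have hsin : Real.sin ((Ψ p + Φ p) - (Φ (Ψ p) + p)) = 0 := by
    rcases mul_eq_zero.mp hzero with h | h
    · exact absurd h (mul_ne_zero hs0 hsu0)
    · exact h
  obtain ⟨n, hn⟩ := Real.sin_eq_zero_iff.mp hsin
  exact ⟨n, by linarith⟩
end
end

section
/- For every A ∈ SL(2,R), the matrix R_θ A (R_θ the rotation by θ) is elliptic (has non-real eigenvalues) if and only if θ modulo π lies outside the range of the map H_A(p) = p − Φ_A(p) on P^1. Moreover, if θ = H_A(p) then the logarithm of the spectral radius of R_θ A equals |log‖A v_p‖|. -/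
open Real MeasureTheory intervalIntegral Matrix Polynomial

noncomputable section

lemma rot_mulVec (θ q : ℝ) : (Rot θ).mulVec (vec q) = vec (θ + q) := by
  funext i
  fin_cases i <;>
    simp [Rot, _root_.vec, Matrix.mulVec, dotProduct, Fin.sum_univ_two,
      Real.cos_add, Real.sin_add] <;> ring

lemma vec_ne_zero (p : ℝ) : vec p ≠ 0 := by
  intro h
  have h0 : Real.cos p = 0 := congrFun h 0
  have h1 : Real.sin p = 0 := congrFun h 1
  have := Real.sin_sq_add_cos_sq p
  rw [h0, h1] at this; norm_num at this

lemma vec_int (x : ℝ) (k : ℤ) : vec (x + k * π) = ((-1 : ℝ) ^ k) • vec x := by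
  funext i
  fin_cases i <;> simp [_root_.vec, Real.cos_add_int_mul_pi, Real.sin_add_int_mul_pi]

lemma cp2 (B : Mat) : B.charpoly = X ^ 2 - C B.trace * X + C B.det := by
  rw [Matrix.charpoly, Matrix.det_fin_two]
  simp [charmatrix_apply_eq, charmatrix_apply_ne, Matrix.trace_fin_two, Matrix.det_fin_two]
  ring

lemma key (A : Mat) (hdet : A.det = 1) (p q : ℝ)
    (h : (A.mulVec (vec p)) 0 * Real.sin q - (A.mulVec (vec p)) 1 * Real.cos q = 0) :
    ∃ r : ℝ, r ≠ 0 ∧ A.mulVec (vec p) = r • vec q ∧ |r| = en (A.mulVec (vec p)) := by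
  set w := A.mulVec (vec p) with hw
  set r := w 0 * Real.cos q + w 1 * Real.sin q with hr
  have hcs := Real.sin_sq_add_cos_sq q
  have h0 : w 0 = r * Real.cos q := by linear_combination Real.sin q * h - w 0 * hcs
  have h1 : w 1 = r * Real.sin q := by linear_combination (-Real.cos q) * h - w 1 * hcs
  have heq : w = r • vec q := by
    funext i; fin_cases i
    · simpa [_root_.vec] using h0
    · simpa [_root_.vec] using h1
  have hrne : r ≠ 0 := by
    intro h0'
    have : w = 0 := by rw [heq, h0', zero_smul]
    have hv : vec p = 0 := Matrix.eq_zero_of_mulVec_eq_zero (by rw [hdet]; norm_num) this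
    exact vec_ne_zero p hv
  refine ⟨r, hrne, heq, ?_⟩
  rw [heq]
  have : (r • vec q) 0 ^ 2 + (r • vec q) 1 ^ 2 = r ^ 2 := by
    simp [_root_.vec]
    linear_combination r ^ 2 * hcs
  rw [en, this, Real.sqrt_sq_eq_abs]

/-- `R_θ A` is elliptic (no real eigenvector) iff `θ` (mod π) misses the range of
`H_A(p) = p - Φ_A(p)`; and for `θ = H_A(p)` the log of the spectral radius of `R_θ A`
is `|log ‖A v_p‖|`. -/
theorem stmt7 (A : Mat) (hdet : A.det = 1) (Φ : ℝ → ℝ)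
    (hΦc : Continuous Φ) (hΦ : IsLift A Φ) :
    (∀ θ : ℝ,
      (¬ ∃ (c : ℝ) (w : Fin 2 → ℝ), w ≠ 0 ∧ (Rot θ * A).mulVec w = c • w)
        ↔ ∀ (p : ℝ) (k : ℤ), θ ≠ p - Φ p + k * π) ∧
    (∀ p : ℝ,
      Real.log (spectralRad (Rot (p - Φ p) * A)) = |Real.log (en (A.mulVec (vec p)))|) := by
  have main : ∀ p : ℝ, ∃ r : ℝ, r ≠ 0 ∧ |r| = en (A.mulVec (vec p)) ∧
      ∀ θ : ℝ, (Rot θ * A).mulVec (vec p) = r • vec (θ + Φ p) := by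
    intro p
    obtain ⟨r, hr, heq, habs⟩ := key A hdet p (Φ p) (hΦ p)
    refine ⟨r, hr, habs, fun θ => ?_⟩
    rw [← Matrix.mulVec_mulVec, heq, Matrix.mulVec_smul, rot_mulVec]
  constructor
  · intro θ
    constructor
    · intro hne p k hθ
      exfalso; apply hne
      obtain ⟨r, hr, _, hmv⟩ := main p
      refine ⟨r * (-1 : ℝ) ^ k, vec p, vec_ne_zero p, ?_⟩
      rw [hmv θ, hθ]
      have h1 : p - Φ p + k * π + Φ p = p + k * π := by ring
      rw [h1, vec_int, smul_smul]
    · rintro h ⟨c, w, hwne, heig⟩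
      set z : ℂ := ⟨w 0, w 1⟩ with hz
      have hzne : z ≠ 0 := by
        intro h0
        apply hwne
        funext i
        fin_cases i
        · simpa using congrArg Complex.re h0
        · simpa using congrArg Complex.im h0
      have hn : (0 : ℝ) < ‖z‖ := norm_pos_iff.mpr hzne
      set p := z.arg with hp
      have hwv : w = ‖z‖ • vec p := by
        funext i
        fin_cases i
        · have := Complex.norm_mul_cos_arg z
          simpa [_root_.vec, mul_comm, -Complex.norm_mul_cos_arg] using this.symm
        · have := Complex.norm_mul_sin_arg z
          simpa [_root_.vec, mul_comm, -Complex.norm_mul_sin_arg] using this.symm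
      obtain ⟨r, hr, _, hmv⟩ := main p
      have hkey : r • vec (θ + Φ p) = c • vec p := by
        have h2 := heig
        rw [hwv, Matrix.mulVec_smul, hmv θ] at h2
        have h3 : ‖z‖ • (r • vec (θ + Φ p)) = ‖z‖ • (c • vec p) := by
          rw [h2, smul_comm]
        exact smul_right_injective (Fin 2 → ℝ) hn.ne' h3
      have E0 := congrFun hkey 0
      have E1 := congrFun hkey 1
      simp [_root_.vec] at E0 E1
      have hs : Real.sin (θ + Φ p - p) = 0 := by
        have h4 : r * Real.sin (θ + Φ p - p) = 0 := by
          rw [Real.sin_sub]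
          linear_combination Real.cos p * E1 - Real.sin p * E0
        exact (mul_eq_zero.mp h4).resolve_left hr
      obtain ⟨m, hm⟩ := Real.sin_eq_zero_iff.mp hs
      exact h p m (by linarith)
  · intro p
    obtain ⟨r, hr, habs, hmv⟩ := main p
    set q := Φ p with hq
    set B := Rot (p - q) * A with hB
    have hBv : B.mulVec (vec p) = r • vec p := by
      rw [hB, hmv (p - q)]
      congr 2
      ring
    have hdB : B.det = 1 := by
      rw [hB, Matrix.det_mul, hdet, mul_one, Rot, Matrix.det_fin_two_of]
      linear_combination Real.sin_sq_add_cos_sq (p - q)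
    have E0 := congrFun hBv 0
    have E1 := congrFun hBv 1
    simp [Matrix.mulVec, dotProduct, Fin.sum_univ_two, _root_.vec] at E0 E1
    have hdet2 : B 0 0 * B 1 1 - B 0 1 * B 1 0 = 1 := by
      rw [← Matrix.det_fin_two]; exact hdB
    have hcs := Real.sin_sq_add_cos_sq p
    have htr : r ^ 2 - B.trace * r + 1 = 0 := by
      rw [Matrix.trace_fin_two]
      set Δ := (B 0 0 - r) * (B 1 1 - r) - B 0 1 * B 1 0 with hΔ
      have h0 : Δ * Real.cos p = 0 := by
        linear_combination (B 1 1 - r) * E0 - B 0 1 * E1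
      have h1 : Δ * Real.sin p = 0 := by
        linear_combination (B 0 0 - r) * E1 - B 1 0 * E0
      have hΔ0 : Δ = 0 := by
        linear_combination Real.cos p * h0 + Real.sin p * h1 - Δ * hcs
      linear_combination hΔ0 - hdet2
    have ht : B.trace = r + r⁻¹ := by
      field_simp
      linear_combination -htr
    have hrC : (r : ℂ) ≠ 0 := by exact_mod_cast hr
    have hroot : ∀ z : ℂ, (B.charpoly.map (algebraMap ℝ ℂ)).IsRoot z ↔
        z = (r : ℂ) ∨ z = (r : ℂ)⁻¹ := by
      intro z
      rw [cp2, hdB, ht]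
      simp only [Polynomial.IsRoot, Polynomial.eval_map, Polynomial.eval₂_add,
        Polynomial.eval₂_sub, Polynomial.eval₂_mul, Polynomial.eval₂_pow,
        Polynomial.eval₂_X, Polynomial.eval₂_C]
      have hm : algebraMap ℝ ℂ (r + r⁻¹) = (r : ℂ) + (r : ℂ)⁻¹ := by
        push_cast; rfl
      have hm1 : algebraMap ℝ ℂ (1 : ℝ) = 1 := map_one _
      rw [hm, hm1]
      constructor
      · intro h5
        have h6 : (z - (r : ℂ)) * (z - (r : ℂ)⁻¹) = 0 := by
          field_simp at h5 ⊢
          linear_combination h5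
        rcases mul_eq_zero.mp h6 with h7 | h7
        · exact Or.inl (sub_eq_zero.mp h7)
        · exact Or.inr (sub_eq_zero.mp h7)
      · rintro (rfl | rfl)
        · field_simp
          ring
        · field_simp
          ring
    have hset : {x : ℝ | ∃ z : ℂ, (B.charpoly.map (algebraMap ℝ ℂ)).IsRoot z ∧
        x = ‖z‖} = {|r|, |r|⁻¹} := by
      ext x
      simp only [Set.mem_setOf_eq, Set.mem_insert_iff, Set.mem_singleton_iff]
      constructor
      · rintro ⟨z, hz, rfl⟩
        rcases (hroot z).mp hz with rfl | rfl
        · exact Or.inl (by rw [Complex.norm_real, Real.norm_eq_abs])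
        · right; rw [norm_inv, Complex.norm_real, Real.norm_eq_abs]
      · rintro (rfl | rfl)
        · exact ⟨r, (hroot _).mpr (Or.inl rfl), (by rw [Complex.norm_real, Real.norm_eq_abs])⟩
        · exact ⟨(r : ℂ)⁻¹, (hroot _).mpr (Or.inr rfl), by rw [norm_inv, Complex.norm_real, Real.norm_eq_abs]⟩
    have hsr : spectralRad B = |r| ⊔ |r|⁻¹ := by
      rw [spectralRad, hset, csSup_pair]
    rw [hsr, ← habs]
    have h0 : (0 : ℝ) < |r| := abs_pos.mpr hr
    rcases le_or_gt 1 |r| with h1 | h1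
    · have hle : |r|⁻¹ ≤ |r| := le_trans (inv_le_one_of_one_le₀ h1) h1
      rw [sup_eq_left.mpr hle, abs_of_nonneg (Real.log_nonneg h1)]
    · have hle : |r| ≤ |r|⁻¹ := le_of_lt (lt_trans h1 ((one_lt_inv₀ h0).mpr h1))
      rw [sup_eq_right.mpr hle, Real.log_inv, abs_of_neg (Real.log_neg h0 h1)]
end
end

section
/- Let A₁,…,Aₙ ∈ SL(2,R), fix p ∈ P^1, and let f : P^1 → P^1 be f(θ) = Φ_{(R_θA₁)⋯(R_θAₙ)}(p). Then f preserves the normalized Haar measure on P^1. -/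
open Real MeasureTheory intervalIntegral Matrix Polynomial
open Complex

noncomputable section

def ca (A : Mat) : ℂ := (((A 0 0 + A 1 1)/2 : ℝ) : ℂ) + (((A 1 0 - A 0 1)/2 : ℝ) : ℂ) * I
def cb (A : Mat) : ℂ := (((A 0 0 - A 1 1)/2 : ℝ) : ℂ) + (((A 1 0 + A 0 1)/2 : ℝ) : ℂ) * I
def zeta (w : Fin 2 → ℝ) : ℂ := (w 0 : ℂ) + (w 1 : ℂ) * I

lemma zeta_mulVec (A : Mat) (w : Fin 2 → ℝ) :
    zeta (A.mulVec w) = ca A * zeta w + cb A * (starRingEnd ℂ) (zeta w) := by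
  simp only [zeta, ca, cb, Matrix.mulVec, dotProduct, Fin.sum_univ_two, _root_.map_add,
    _root_.map_mul, Complex.conj_ofReal, Complex.conj_I]
  push_cast
  ring_nf
  simp [Complex.I_sq]

lemma normSq_ca_sub (A : Mat) : Complex.normSq (ca A) - Complex.normSq (cb A) = A.det := by
  simp [ca, cb, Complex.normSq_apply, Matrix.det_fin_two]
  ring

def MA (A : Mat) (u : ℂ) : ℂ :=
  (ca A * u + cb A) / ((starRingEnd ℂ) (cb A) * u + (starRingEnd ℂ) (ca A))

lemma abs_cb_lt (A : Mat) (hd : A.det = 1) : ‖cb A‖ < ‖ca A‖ := by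
  have h := normSq_ca_sub A
  rw [hd] at h
  have := Complex.sq_norm (ca A)
  have := Complex.sq_norm (cb A)
  nlinarith [norm_nonneg (ca A), norm_nonneg (cb A)]

lemma num_ne_zero (A : Mat) (hd : A.det = 1) {z : ℂ} (hz : z ≠ 0) :
    ca A * z + cb A * (starRingEnd ℂ) z ≠ 0 := by
  intro h
  have h2 : ca A * z = - (cb A * (starRingEnd ℂ) z) := by linear_combination h
  have h3 : ‖ca A‖ * ‖z‖ = ‖cb A‖ * ‖z‖ := by
    have := congrArg Norm.norm h2
    simpa [norm_mul] using this
  have hza : 0 < ‖z‖ := norm_pos_iff.mpr hz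
  have := abs_cb_lt A hd
  nlinarith

lemma den_ne_zero (A : Mat) (hd : A.det = 1) {u : ℂ} (hu : ‖u‖ ≤ 1) :
    (starRingEnd ℂ) (cb A) * u + (starRingEnd ℂ) (ca A) ≠ 0 := by
  intro h
  have h2 : (starRingEnd ℂ) (cb A) * u = - (starRingEnd ℂ) (ca A) := by linear_combination h
  have h3 := congrArg Norm.norm h2
  rw [norm_neg, norm_mul] at h3
  simp only [Complex.norm_conj] at h3
  have := abs_cb_lt A hd
  nlinarith [norm_nonneg (cb A), norm_nonneg (ca A), norm_nonneg u]

lemma abs_MA_le (A : Mat) (hd : A.det = 1) {u : ℂ} (hu : ‖u‖ ≤ 1) :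
    ‖MA A u‖ ≤ 1 := by
  have hden := den_ne_zero A hd hu
  rw [MA, norm_div]
  rw [div_le_one (norm_pos_iff.mpr hden)]
  -- compare normSq
  have key : Complex.normSq (ca A * u + cb A) ≤
      Complex.normSq ((starRingEnd ℂ) (cb A) * u + (starRingEnd ℂ) (ca A)) := by
    have e1 : Complex.normSq ((starRingEnd ℂ) (cb A) * u + (starRingEnd ℂ) (ca A)) -
        Complex.normSq (ca A * u + cb A)
        = (Complex.normSq (ca A) - Complex.normSq (cb A)) * (1 - Complex.normSq u) := by
      simp [Complex.normSq_apply, Complex.normSq]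
      ring
    have h1 : Complex.normSq u ≤ 1 := by
      rw [← Complex.sq_norm]; nlinarith [norm_nonneg u]
    rw [normSq_ca_sub A, hd] at e1
    nlinarith
  have := Real.sqrt_le_sqrt key
  simpa [Complex.norm_def] using this

lemma ratio_eq_MA (A : Mat) (hd : A.det = 1) {z : ℂ} (hz : z ≠ 0) :
    (ca A * z + cb A * (starRingEnd ℂ) z) / (starRingEnd ℂ) (ca A * z + cb A * (starRingEnd ℂ) z)
      = MA A (z / (starRingEnd ℂ) z) := by
  have hzc : (starRingEnd ℂ) z ≠ 0 := by simpa using hz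
  have habs : ‖z / (starRingEnd ℂ) z‖ ≤ 1 := by
    rw [norm_div, Complex.norm_conj, div_self (norm_ne_zero_iff.mpr hz)]
  have hden := den_ne_zero A hd habs
  have hnum := num_ne_zero A hd hz
  have hcN : (starRingEnd ℂ) (ca A * z + cb A * (starRingEnd ℂ) z)
      = (starRingEnd ℂ) (ca A) * (starRingEnd ℂ) z + (starRingEnd ℂ) (cb A) * z := by
    rw [_root_.map_add, _root_.map_mul, _root_.map_mul, Complex.conj_conj]
  have hcNne : (starRingEnd ℂ) (ca A) * (starRingEnd ℂ) z + (starRingEnd ℂ) (cb A) * z ≠ 0 := by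
    rw [← hcN, starRingEnd_apply]
    exact star_ne_zero.mpr hnum
  rw [MA, hcN]
  rw [div_eq_div_iff hcNne hden]
  field_simp
  ring_nf
  try exact Or.inl trivial

lemma zeta_rot (θ : ℝ) (w : Fin 2 → ℝ) :
    zeta ((!![Real.cos θ, -Real.sin θ; Real.sin θ, Real.cos θ] : Mat).mulVec w)
      = Complex.exp (θ * I) * zeta w := by
  simp only [zeta, Matrix.mulVec, dotProduct, Fin.sum_univ_two, Complex.exp_mul_I]
  simp [Matrix.cons_val_zero, Matrix.cons_val_one, Matrix.head_cons]
  linear_combination (-(Complex.sin (θ:ℂ)) * ((w 1 : ℝ) : ℂ)) * Complex.I_sq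


def Bl (u0 : ℂ) : List Mat → ℂ → ℂ
  | [] => fun _ => u0
  | A :: l => fun z => z * MA A (Bl u0 l z)

lemma zeta_vec (p : ℝ) : zeta (vec p) = Complex.exp (p * I) := by
  simp [zeta, _root_.vec, Complex.exp_mul_I]

lemma conj_exp_real_mul_I (θ : ℝ) :
    (starRingEnd ℂ) (Complex.exp (θ * I)) = Complex.exp (-(θ * I)) := by
  rw [← Complex.exp_conj]
  congr 1
  simp

lemma bridge (p : ℝ) : ∀ (l : List Mat), (∀ A ∈ l, A.det = 1) → ∀ θ : ℝ,
    zeta ((Wp θ l).mulVec (vec p)) ≠ 0 ∧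
    zeta ((Wp θ l).mulVec (vec p)) / (starRingEnd ℂ) (zeta ((Wp θ l).mulVec (vec p)))
      = Bl (Complex.exp (2 * p * I)) l (Complex.exp (2 * θ * I)) := by
  intro l
  induction l with
  | nil =>
    intro _ θ
    have h1 : Wp θ [] = (1 : Mat) := by simp [Wp]
    rw [h1, Matrix.one_mulVec, zeta_vec, Bl]
    refine ⟨Complex.exp_ne_zero _, ?_⟩
    rw [conj_exp_real_mul_I, ← Complex.exp_sub]
    congr 1
    push_cast
    ring
  | cons A l ih =>
    intro hdet θ
    have hA : A.det = 1 := hdet A List.mem_cons_self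
    have hl : ∀ B ∈ l, B.det = 1 := fun B hB => hdet B (List.mem_cons_of_mem A hB)
    obtain ⟨hz, hr⟩ := ih hl θ
    set ζ := zeta ((Wp θ l).mulVec (vec p)) with hζ
    have hW : Wp θ (A :: l) = (Rot θ * A) * Wp θ l := by
      simp [Wp, List.map_cons, List.prod_cons]
    have hmv : (Wp θ (A :: l)).mulVec (vec p)
        = (Rot θ).mulVec (A.mulVec ((Wp θ l).mulVec (vec p))) := by
      rw [hW, ← Matrix.mulVec_mulVec, ← Matrix.mulVec_mulVec]
    have hzeta : zeta ((Wp θ (A :: l)).mulVec (vec p))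
        = Complex.exp (θ * I) * (ca A * ζ + cb A * (starRingEnd ℂ) ζ) := by
      rw [hmv, Rot, zeta_rot, zeta_mulVec]
    have hN := num_ne_zero A hA hz
    constructor
    · rw [hzeta]; exact mul_ne_zero (Complex.exp_ne_zero _) hN
    · rw [hzeta]
      show _ = Complex.exp (2 * θ * I) * MA A (Bl (Complex.exp (2 * p * I)) l (Complex.exp (2 * θ * I)))
      rw [← hr, ← ratio_eq_MA A hA hz]
      have hcN : (starRingEnd ℂ) (ca A * ζ + cb A * (starRingEnd ℂ) ζ) ≠ 0 := by
        rw [starRingEnd_apply]; exact star_ne_zero.mpr hN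
      rw [_root_.map_mul, conj_exp_real_mul_I]
      have he2 : Complex.exp ((2:ℂ) * (θ:ℝ) * I) = Complex.exp ((θ:ℝ) * I) * Complex.exp ((θ:ℝ) * I) := by
        rw [← Complex.exp_add]; congr 1; push_cast; ring
      rw [he2, Complex.exp_neg]
      field_simp

lemma Bl_bound {u0 : ℂ} (hu0 : ‖u0‖ ≤ 1) :
    ∀ l : List Mat, (∀ A ∈ l, A.det = 1) → ∀ z : ℂ, ‖z‖ ≤ 1 →
    ‖Bl u0 l z‖ ≤ 1 := by
  intro l
  induction l with
  | nil => intro _ z _; simpa [Bl] using hu0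
  | cons A l ih =>
    intro hdet z hz
    have hA : A.det = 1 := hdet A List.mem_cons_self
    have hl : ∀ B ∈ l, B.det = 1 := fun B hB => hdet B (List.mem_cons_of_mem A hB)
    rw [Bl.eq_2, norm_mul]
    calc ‖z‖ * ‖MA A (Bl u0 l z)‖ ≤ 1 * 1 := by
          apply mul_le_mul hz (abs_MA_le A hA (ih hl z hz)) (norm_nonneg _) zero_le_one
      _ = 1 := one_mul 1

lemma Bl_diff {u0 : ℂ} (hu0 : ‖u0‖ ≤ 1) :
    ∀ l : List Mat, (∀ A ∈ l, A.det = 1) →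
    DifferentiableOn ℂ (Bl u0 l) (Metric.closedBall 0 1) := by
  intro l
  induction l with
  | nil => intro _; simpa [Bl] using differentiableOn_const u0
  | cons A l ih =>
    intro hdet
    have hA : A.det = 1 := hdet A List.mem_cons_self
    have hl : ∀ B ∈ l, B.det = 1 := fun B hB => hdet B (List.mem_cons_of_mem A hB)
    have habs : ∀ x ∈ Metric.closedBall (0:ℂ) 1, ‖Bl u0 l x‖ ≤ 1 := by
      intro x hx
      apply Bl_bound hu0 l hl
      simpa using Metric.mem_closedBall.mp hx
    have hden : ∀ x ∈ Metric.closedBall (0:ℂ) 1,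
        (starRingEnd ℂ) (cb A) * Bl u0 l x + (starRingEnd ℂ) (ca A) ≠ 0 :=
      fun x hx => den_ne_zero A hA (habs x hx)
    have : DifferentiableOn ℂ (fun z => z * MA A (Bl u0 l z)) (Metric.closedBall 0 1) := by
      simp only [MA]
      exact differentiableOn_id.mul
        (((((ih hl).const_mul (ca A)).add (differentiableOn_const (cb A))).div
          (((ih hl).const_mul ((starRingEnd ℂ) (cb A))).add
            (differentiableOn_const ((starRingEnd ℂ) (ca A)))) hden))
    exact this.congr (fun x _ => by rw [Bl])

lemma meanvalue (f : ℂ → ℂ) (hd : DiffContOnCl ℂ f (Metric.ball 0 1)) :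
    ∫ θ in (0:ℝ)..(2*π), f (Complex.exp (θ * I)) = 2 * π * f 0 := by
  have h := hd.circleIntegral_sub_inv_smul (w := 0) (by simp)
  rw [circleIntegral] at h
  simp only [sub_zero, deriv_circleMap, smul_eq_mul, circleMap, Complex.ofReal_one, one_mul,
    Complex.ofReal_zero, zero_add] at h
  have heq : ∀ θ : ℝ, Complex.exp (θ * I) * I * ((Complex.exp (θ * I))⁻¹ * f (Complex.exp (θ * I)))
      = I * f (Complex.exp (θ * I)) := by
    intro θ
    field_simp [Complex.exp_ne_zero]
  rw [intervalIntegral.integral_congr (fun θ _ => heq θ)] at h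
  rw [intervalIntegral.integral_const_mul] at h
  refine mul_left_cancel₀ Complex.I_ne_zero (h.trans ?_)
  ring


lemma parr_exp {w : Fin 2 → ℝ} {q : ℝ} (hp : parr w q) (hz : zeta w ≠ 0) :
    zeta w / (starRingEnd ℂ) (zeta w) = Complex.exp (2 * q * I) := by
  set r : ℝ := w 0 * Real.cos q + w 1 * Real.sin q with hr
  have hzw : zeta w = (r : ℂ) * Complex.exp (q * I) := by
    rw [Complex.exp_mul_I]
    apply Complex.ext
    · simp [zeta, hr, Complex.cos_ofReal_re, Complex.sin_ofReal_re]
      have := hp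
      rw [parr] at this
      linear_combination Real.sin q * this - w 0 * Real.sin_sq_add_cos_sq q
    · simp [zeta, hr, Complex.cos_ofReal_re, Complex.sin_ofReal_re]
      have := hp
      rw [parr] at this
      linear_combination (-Real.cos q) * this - w 1 * Real.sin_sq_add_cos_sq q
  have hrne : (r : ℂ) ≠ 0 := by
    intro h
    apply hz
    rw [hzw, h, zero_mul]
  rw [hzw, _root_.map_mul, Complex.conj_ofReal, conj_exp_real_mul_I]
  rw [mul_div_mul_left _ _ hrne, Complex.exp_neg, div_eq_mul_inv, inv_inv, ← Complex.exp_add]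
  congr 1
  push_cast
  ring

lemma pow_integral {u0 : ℂ} (hu0 : ‖u0‖ ≤ 1) (B0 : Mat) (l : List Mat)
    (hdet : ∀ A ∈ (B0 :: l), A.det = 1) (k : ℕ) (hk : 1 ≤ k) :
    ∫ θ in (0:ℝ)..π, (Bl u0 (B0 :: l) (Complex.exp (2 * θ * I))) ^ k = 0 := by
  set f : ℂ → ℂ := fun z => (Bl u0 (B0 :: l) z) ^ k with hf
  have hdiff : DifferentiableOn ℂ f (Metric.closedBall 0 1) :=
    (Bl_diff hu0 (B0 :: l) hdet).pow k
  have hdc : DiffContOnCl ℂ f (Metric.ball 0 1) := by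
    constructor
    · exact hdiff.mono Metric.ball_subset_closedBall
    · rw [closure_ball (0:ℂ) one_ne_zero]
      exact hdiff.continuousOn
  have hf0 : f 0 = 0 := by
    simp only [hf, Bl, zero_mul]
    exact zero_pow (by omega)
  have hmv := meanvalue f hdc
  rw [hf0, mul_zero] at hmv
  have hcv := intervalIntegral.integral_comp_mul_left
    (fun s : ℝ => f (Complex.exp (s * I))) (two_ne_zero) (a := 0) (b := π)
  rw [mul_zero] at hcv
  have : ∀ θ : ℝ, (Bl u0 (B0 :: l) (Complex.exp (2 * θ * I))) ^ k
      = (fun s : ℝ => f (Complex.exp (s * I))) (2 * θ) := by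
    intro θ; simp only [hf]; push_cast; ring_nf
  rw [intervalIntegral.integral_congr (fun θ _ => this θ)]
  rw [hcv, hmv, smul_zero]

lemma intervalIntegral_conj {f : ℝ → ℂ} {a b : ℝ} :
    ∫ x in a..b, (starRingEnd ℂ) (f x) = (starRingEnd ℂ) (∫ x in a..b, f x) := by
  rw [intervalIntegral, intervalIntegral, map_sub, integral_conj, integral_conj]

lemma periodic_lift_continuous {T : ℝ} [hT : Fact (0 < T)] {f : ℝ → ℂ}
    (hf : Continuous f) (hp : Function.Periodic f T) :
    Continuous (hp.lift : AddCircle T → ℂ) := by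
  exact hf.quotient_liftOn' _

def pushL (T : ℝ) [hT : Fact (0 < T)] (φ : ℝ → AddCircle T) (hφ : Continuous φ) : C(AddCircle T, ℂ) →L[ℂ] ℂ :=
  LinearMap.mkContinuous
    { toFun := fun g : C(AddCircle T, ℂ) => ∫ θ in (0:ℝ)..T, g (φ θ)
      map_add' := fun g₁ g₂ => by
        simp only [ContinuousMap.add_apply]
        exact intervalIntegral.integral_add
          (((g₁.continuous).comp hφ).intervalIntegrable 0 T)
          (((g₂.continuous).comp hφ).intervalIntegrable 0 T)
      map_smul' := fun c g => by
        simp only [ContinuousMap.smul_apply, RingHom.id_apply]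
        exact intervalIntegral.integral_smul c _ }
    |T| (fun g => by
      have : ‖∫ θ in (0:ℝ)..T, g (φ θ)‖ ≤ ‖g‖ * |T - 0| :=
        intervalIntegral.norm_integral_le_of_norm_le_const
          (fun x _ => g.norm_coe_le_norm (φ x))
      simpa [mul_comm] using this)

lemma pushL_apply (T : ℝ) [hT : Fact (0 < T)] (φ : ℝ → AddCircle T) (hφ : Continuous φ)
    (g : C(AddCircle T, ℂ)) :
    pushL T φ hφ g = ∫ θ in (0:ℝ)..T, g (φ θ) := by
  rfl

lemma fourier_pi (k : ℤ) (x : ℝ) :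
    (fourier k : C(AddCircle π, ℂ)) ((x : ℝ) : AddCircle π) = Complex.exp (2 * k * x * I) := by
  rw [fourier_coe_apply]
  congr 1
  have hπ : (π:ℂ) ≠ 0 := Complex.ofReal_ne_zero.mpr Real.pi_ne_zero
  field_simp

lemma int_exp (k : ℤ) (hk : k ≠ 0) : ∫ θ in (0:ℝ)..π, Complex.exp (2 * k * θ * I) = 0 := by
  have h1 : ∀ θ:ℝ, Complex.exp (2*(k:ℂ)*(θ:ℝ)*I) = Complex.exp ((2*(k:ℂ)*I)*(θ:ℝ)) := by
    intro θ; ring_nf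
  rw [intervalIntegral.integral_congr (fun θ _ => h1 θ)]
  have hc : (2*(k:ℂ)*I) ≠ 0 := by
    apply mul_ne_zero (mul_ne_zero two_ne_zero _) Complex.I_ne_zero
    exact_mod_cast Int.cast_ne_zero.mpr hk
  rw [integral_exp_mul_complex hc]
  have h2 : (2*(k:ℂ)*I) * (π:ℝ) = (k:ℂ) * (2*(π:ℝ)*I) := by push_cast; ring
  rw [Complex.ofReal_zero, mul_zero, Complex.exp_zero, h2, Complex.exp_int_mul_two_pi_mul_I]
  simp

/-- For fixed `p`, the map `θ ↦ Φ_{(R_θA₁)⋯(R_θAₙ)}(p)` preserves the Haar measure on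
P¹ = ℝ/πℤ: integrals of π-periodic continuous functions are preserved. -/
theorem stmt10 (n : ℕ) (hn : 1 ≤ n) (A : Fin n → Mat) (hdet : ∀ i, (A i).det = 1)
    (p : ℝ) (F : ℝ → ℝ) (hFc : Continuous F)
    (hF : ∀ θ : ℝ, parr ((Wp θ (List.ofFn A)).mulVec (vec p)) (F θ)) :
    ∀ g : ℝ → ℝ, Continuous g → (∀ x, g (x + π) = g x) →
      ∫ θ in (0:ℝ)..π, g (F θ) = ∫ θ in (0:ℝ)..π, g θ := by
  intro g hg hper
  haveI : Fact (0 < π) := ⟨Real.pi_pos⟩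
  set u0 : ℂ := Complex.exp (2 * p * I) with hu0def
  have hu0 : ‖u0‖ ≤ 1 := by
    rw [hu0def, Complex.norm_exp]
    simp
  have hdl : ∀ B ∈ List.ofFn A, B.det = 1 := by
    intro B hB
    rw [List.mem_ofFn] at hB
    obtain ⟨i, rfl⟩ := hB
    exact hdet i
  obtain ⟨m, rfl⟩ : ∃ m, n = m + 1 := ⟨n-1, by omega⟩
  have hofn : List.ofFn A = A 0 :: List.ofFn (fun i : Fin m => A i.succ) := List.ofFn_succ
  have key : ∀ θ:ℝ, Complex.exp (2 * (F θ:ℝ) * I) = Bl u0 (List.ofFn A) (Complex.exp (2*(θ:ℝ)*I)) := by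
    intro θ
    obtain ⟨hz, hrat⟩ := bridge p (List.ofFn A) hdl θ
    rw [← hrat, parr_exp (hF θ) hz]
  have lhsPos : ∀ k : ℤ, 0 < k →
      (∫ θ in (0:ℝ)..π, Complex.exp (2 * (k:ℂ) * (F θ:ℝ) * I)) = 0 := by
    intro k hk
    have hpt : ∀ θ:ℝ, Complex.exp (2*(k:ℂ)*(F θ:ℝ)*I)
        = (Bl u0 (List.ofFn A) (Complex.exp (2*(θ:ℝ)*I)))^(k.toNat) := by
      intro θ
      rw [← key θ, ← Complex.exp_nat_mul]
      congr 1
      have : ((k.toNat : ℕ) : ℂ) = (k:ℂ) := by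
        push_cast [Int.toNat_of_nonneg hk.le]
        norm_cast
        exact_mod_cast (Int.toNat_of_nonneg hk.le)
      rw [this]
      ring
    rw [intervalIntegral.integral_congr (fun θ _ => hpt θ)]
    rw [hofn] at hdl ⊢
    exact pow_integral hu0 _ _ hdl k.toNat (by omega)
  have lhs0 : ∀ k : ℤ, k ≠ 0 →
      (∫ θ in (0:ℝ)..π, Complex.exp (2 * (k:ℂ) * (F θ:ℝ) * I)) = 0 := by
    intro k hk
    rcases hk.lt_or_gt with hneg | hpos
    · have hc : ∀ θ:ℝ, Complex.exp (2*(k:ℂ)*(F θ:ℝ)*I)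
          = (starRingEnd ℂ) (Complex.exp (2*((-k:ℤ):ℂ)*(F θ:ℝ)*I)) := by
        intro θ
        have e1 : (2*((-k:ℤ):ℂ)*(F θ:ℝ)) = ((2*(-k:ℤ)*(F θ) : ℝ) : ℂ) := by push_cast; ring
        have e2 : (2*(k:ℂ)*(F θ:ℝ)) = -((2*(-k:ℤ)*(F θ) : ℝ) : ℂ) := by push_cast; ring
        rw [e1, conj_exp_real_mul_I, e2, neg_mul]
      rw [intervalIntegral.integral_congr (fun θ _ => hc θ), intervalIntegral_conj,
        lhsPos (-k) (by omega), map_zero]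
    · exact lhsPos k hpos
  have char : ∀ k : ℤ,
      (∫ θ in (0:ℝ)..π, (fourier k : C(AddCircle π, ℂ)) ((F θ : ℝ) : AddCircle π))
        = ∫ θ in (0:ℝ)..π, (fourier k : C(AddCircle π, ℂ)) ((θ : ℝ) : AddCircle π) := by
    intro k
    have e1 : ∀ θ:ℝ, (fourier k : C(AddCircle π, ℂ)) ((F θ : ℝ) : AddCircle π)
        = Complex.exp (2 * (k:ℂ) * (F θ:ℝ) * I) := fun θ => fourier_pi k (F θ)
    have e2 : ∀ θ:ℝ, (fourier k : C(AddCircle π, ℂ)) ((θ : ℝ) : AddCircle π)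
        = Complex.exp (2 * (k:ℂ) * (θ:ℝ) * I) := fun θ => fourier_pi k θ
    rw [intervalIntegral.integral_congr (fun θ _ => e1 θ),
      intervalIntegral.integral_congr (fun θ _ => e2 θ)]
    by_cases hk : k = 0
    · subst hk; simp
    · rw [lhs0 k hk, int_exp k hk]
  have hcoe : Continuous (fun x : ℝ => (x : AddCircle π)) := continuous_quotient_mk'
  have hφ1 : Continuous (fun θ:ℝ => ((F θ : ℝ) : AddCircle π)) := hcoe.comp hFc
  have hL : pushL π (fun θ:ℝ => ((F θ : ℝ) : AddCircle π)) hφ1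
      = pushL π (fun x : ℝ => (x : AddCircle π)) hcoe := by
    apply ContinuousLinearMap.ext_on
      (Submodule.dense_iff_topologicalClosure_eq_top.mpr span_fourier_closure_eq_top)
    rintro x ⟨k, rfl⟩
    rw [pushL_apply, pushL_apply]
    exact char k
  set gc : ℝ → ℂ := fun x => (g x : ℂ) with hgc
  have hpgc : Function.Periodic gc π := fun x => by simp only [hgc]; exact congrArg Complex.ofReal (hper x)
  have hgcont : Continuous gc := Complex.continuous_ofReal.comp hg
  set G : C(AddCircle π, ℂ) := ⟨hpgc.lift, periodic_lift_continuous hgcont hpgc⟩ with hG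
  have hLG := congrArg (fun L : C(AddCircle π, ℂ) →L[ℂ] ℂ => L G) hL
  simp only [pushL_apply] at hLG
  have hlift : ∀ x : ℝ, G ((x:ℝ) : AddCircle π) = (g x : ℂ) := fun x => hpgc.lift_coe x
  have h2 : (∫ θ in (0:ℝ)..π, (g (F θ) : ℂ)) = ∫ θ in (0:ℝ)..π, (g θ : ℂ) := by
    have l1 : ∀ θ:ℝ, G ((F θ : ℝ) : AddCircle π) = (g (F θ) : ℂ) := fun θ => hlift (F θ)
    rw [intervalIntegral.integral_congr (fun θ _ => (l1 θ).symm),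
      intervalIntegral.integral_congr (fun θ _ => (hlift θ).symm)]
    exact hLG
  rw [intervalIntegral.integral_ofReal, intervalIntegral.integral_ofReal] at h2
  exact_mod_cast h2
end
end

section
/- Let A = (A₁,…,Aₙ) ∈ SL(2,R)^n and let H̃₁,…,H̃ₙ : P^1 → P^1 be the implicit functions satisfying Φ_{R_{H̃ⱼ(p)}A}(p) = p. Then for every p ∈ P^1, the sum of derivatives Σⱼ H̃ⱼ'(p) equals 1 − Φ_{Aₙ}'(p) = 1 − 1/‖Aₙ v_p‖². -/
open Real MeasureTheory intervalIntegral Matrix Polynomial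

noncomputable section

def cx (w : Fin 2 → ℝ) : ℂ := ⟨w 0, w 1⟩
def αM (B : Mat) : ℂ := ⟨(B 0 0 + B 1 1)/2, (B 1 0 - B 0 1)/2⟩
def βM (B : Mat) : ℂ := ⟨(B 0 0 - B 1 1)/2, (B 1 0 + B 0 1)/2⟩

lemma cx_mulVec (B : Mat) (w : Fin 2 → ℝ) :
    cx (B.mulVec w) = αM B * cx w + βM B * (starRingEnd ℂ) (cx w) := by
  apply Complex.ext <;>
    simp [cx, αM, βM, Matrix.mulVec, dotProduct, Fin.sum_univ_two,
      Complex.add_re, Complex.mul_re, Complex.mul_im] <;> ring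

lemma cx_vec (p : ℝ) : cx (vec p) = Complex.exp (p * Complex.I) := by
  rw [Complex.exp_mul_I]
  apply Complex.ext <;> simp [cx, _root_.vec, Complex.cos_ofReal_re, Complex.sin_ofReal_re]

lemma det_eq (B : Mat) : (B.det : ℂ).re = B.det := rfl

lemma normSq_αβ (B : Mat) : Complex.normSq (αM B) - Complex.normSq (βM B) = B.det := by
  simp [Complex.normSq_apply, αM, βM, Matrix.det_fin_two]; ring

lemma αM_Rot (θ : ℝ) : αM (Rot θ) = Complex.exp (θ * Complex.I) := by
  rw [Complex.exp_mul_I]; apply Complex.ext <;> simp [αM, Rot, Complex.cos_ofReal_re, Complex.sin_ofReal_re]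

lemma βM_Rot (θ : ℝ) : βM (Rot θ) = 0 := by
  apply Complex.ext <;> simp [βM, Rot]

lemma parr_iff (w : Fin 2 → ℝ) (q : ℝ) :
    parr w q ↔ Complex.exp (-(q:ℂ) * Complex.I) * cx w
      = Complex.exp ((q:ℂ) * Complex.I) * (starRingEnd ℂ) (cx w) := by
  rw [parr, Complex.ext_iff]
  rw [show (-(q:ℂ) * Complex.I) = ((-q : ℝ) : ℂ) * Complex.I by push_cast; ring]
  rw [Complex.exp_mul_I, Complex.exp_mul_I]
  simp [cx, Complex.mul_re, Complex.mul_im, Complex.cos_ofReal_re, Complex.sin_ofReal_re,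
    Complex.cos_ofReal_im, Complex.sin_ofReal_im]
  constructor
  · intro h; linarith
  · intro h; linarith

/-- Pair of polynomials encoding `cx (Wp θ l ⬝ v_p)` and its conjugate. -/
def QP (p : ℝ) : List Mat → (Polynomial ℂ × Polynomial ℂ)
  | [] => (C (Complex.exp (p * Complex.I)), C (Complex.exp (-(p:ℂ) * Complex.I)))
  | B :: l =>
      ((C (αM B)) * (QP p l).1 + (C (βM B)) * (QP p l).2,
        X * ((C ((starRingEnd ℂ) (αM B))) * (QP p l).2 + (C ((starRingEnd ℂ) (βM B))) * (QP p l).1))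

lemma conj_exp_mul_I (x : ℝ) :
    (starRingEnd ℂ) (Complex.exp ((x:ℂ) * Complex.I)) = Complex.exp (-(x:ℂ) * Complex.I) := by
  rw [← Complex.exp_conj]; congr 1; simp

lemma conj_exp_neg (x : ℝ) :
    (starRingEnd ℂ) (Complex.exp (-(x:ℂ) * Complex.I)) = Complex.exp ((x:ℂ) * Complex.I) := by
  rw [← Complex.exp_conj]; congr 1; simp

lemma QP_eval (p : ℝ) (l : List Mat) (θ : ℝ) :
    cx ((Wp θ l).mulVec (vec p))
      = Complex.exp (l.length * θ * Complex.I) * (QP p l).1.eval (Complex.exp (-2*θ * Complex.I))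
    ∧ (starRingEnd ℂ) (cx ((Wp θ l).mulVec (vec p)))
      = Complex.exp (l.length * θ * Complex.I) * (QP p l).2.eval (Complex.exp (-2*θ * Complex.I)) := by
  induction l with
  | nil =>
      simp only [Wp, List.map_nil, List.prod_nil, Matrix.one_mulVec, QP, List.length_nil]
      rw [cx_vec]
      constructor
      · simp
      · simp [conj_exp_mul_I p]
  | cons B l ih =>
      have hWp : Wp θ (B :: l) = (Rot θ * B) * Wp θ l := by
        simp [Wp, List.map_cons, List.prod_cons]
      obtain ⟨ih1, ih2⟩ := ih
      have hv : (Wp θ (B :: l)).mulVec (vec p)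
          = (Rot θ).mulVec (B.mulVec ((Wp θ l).mulVec (vec p))) := by
        rw [hWp, Matrix.mulVec_mulVec, Matrix.mulVec_mulVec, Matrix.mul_assoc]
      set w := (Wp θ l).mulVec (vec p) with hw
      have hcx : cx ((Wp θ (B :: l)).mulVec (vec p))
          = Complex.exp (θ * Complex.I) * (αM B * cx w + βM B * (starRingEnd ℂ) (cx w)) := by
        rw [hv, cx_mulVec (Rot θ), cx_mulVec B, αM_Rot, βM_Rot]
        ring
      have hlen : ((B :: l).length : ℂ) = (l.length : ℂ) + 1 := by
        push_cast [List.length_cons]; ring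
      have hexp : Complex.exp (((B::l).length : ℂ) * θ * Complex.I)
          = Complex.exp ((θ:ℂ) * Complex.I) * Complex.exp ((l.length : ℂ) * θ * Complex.I) := by
        rw [← Complex.exp_add]; congr 1; rw [hlen]; ring
      constructor
      · rw [hcx, ih2, ih1]
        simp only [QP, Polynomial.eval_add, Polynomial.eval_mul, Polynomial.eval_C]
        rw [hexp]; ring
      · have hc2 : (starRingEnd ℂ) (cx ((Wp θ (B :: l)).mulVec (vec p)))
            = Complex.exp (-(θ:ℂ) * Complex.I) *
              ((starRingEnd ℂ) (αM B) * ((starRingEnd ℂ) (cx w))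
                + (starRingEnd ℂ) (βM B) * cx w) := by
          rw [hcx, map_mul (starRingEnd ℂ), map_add (starRingEnd ℂ),
            map_mul (starRingEnd ℂ) (αM B), map_mul (starRingEnd ℂ) (βM B),
            conj_exp_mul_I θ, Complex.conj_conj]
        rw [hc2, ih2, ih1]
        simp only [QP, Polynomial.eval_add, Polynomial.eval_mul, Polynomial.eval_C,
          Polynomial.eval_X]
        have key : Complex.exp (-(θ:ℂ)*Complex.I) * Complex.exp ((l.length:ℂ)*θ*Complex.I)
            = Complex.exp (((B::l).length:ℂ)*θ*Complex.I)
              * Complex.exp (-2*(θ:ℂ)*Complex.I) := by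
          rw [← Complex.exp_add, ← Complex.exp_add]; congr 1; rw [hlen]; ring
        calc Complex.exp (-(θ:ℂ) * Complex.I) *
              ((starRingEnd ℂ) (αM B) * (Complex.exp ((l.length:ℂ)*θ*Complex.I)
                  * (QP p l).2.eval (Complex.exp (-2*(θ:ℂ)*Complex.I)))
                + (starRingEnd ℂ) (βM B) * (Complex.exp ((l.length:ℂ)*θ*Complex.I)
                  * (QP p l).1.eval (Complex.exp (-2*(θ:ℂ)*Complex.I))))
            = (Complex.exp (-(θ:ℂ)*Complex.I) * Complex.exp ((l.length:ℂ)*θ*Complex.I)) *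
              ((starRingEnd ℂ) (αM B) * (QP p l).2.eval (Complex.exp (-2*(θ:ℂ)*Complex.I))
                + (starRingEnd ℂ) (βM B) * (QP p l).1.eval (Complex.exp (-2*(θ:ℂ)*Complex.I))) := by
              ring
          _ = _ := by rw [key]; ring

lemma QP_coeff_hi (p : ℝ) (l : List Mat) : ∀ k : ℕ,
    (l.length ≤ k → 1 ≤ k → (QP p l).1.coeff k = 0) ∧
    (l.length + 1 ≤ k → (QP p l).2.coeff k = 0) := by
  induction l with
  | nil =>
      intro k
      constructor
      · intro _ hk; simp [QP, Polynomial.coeff_C]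
        omega
      · intro hk; simp [QP, Polynomial.coeff_C]
        omega
  | cons B l ih =>
      intro k
      constructor
      · intro h1 h2
        simp only [QP, Polynomial.coeff_add, Polynomial.coeff_C_mul]
        rw [(ih k).1 (by simp at h1 ⊢; omega) h2, (ih k).2 (by simp at h1 ⊢; omega)]
        ring
      · intro h1
        obtain ⟨k, rfl⟩ : ∃ m, k = m + 1 := ⟨k - 1, by omega⟩
        simp only [QP, Polynomial.coeff_X_mul, Polynomial.coeff_add, Polynomial.coeff_C_mul]
        rw [(ih k).2 (by simp at h1 ⊢; omega), (ih k).1 (by simp at h1 ⊢; omega) (by simp at h1 ⊢; omega)]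
        ring

lemma QP2_coeff0 (p : ℝ) (B : Mat) (l : List Mat) : (QP p (B :: l)).2.coeff 0 = 0 := by
  simp [QP, Polynomial.mul_coeff_zero]

lemma QP1_coeff0 (p : ℝ) : ∀ (l : List Mat) (B : Mat),
    (QP p (l ++ [B])).1.coeff 0
      = (l.map αM).prod * (αM B * Complex.exp (p * Complex.I)
          + βM B * Complex.exp (-(p:ℂ) * Complex.I)) := by
  intro l
  induction l with
  | nil => intro B; simp [QP]
  | cons B' l ih =>
      intro B
      have : (B' :: l) ++ [B] = B' :: (l ++ [B]) := rfl
      rw [this]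
      simp only [QP, Polynomial.coeff_add, Polynomial.coeff_C_mul]
      have h2 : (QP p (l ++ [B])).2.coeff 0 = 0 := by
        cases l with
        | nil => exact QP2_coeff0 p B []
        | cons C' l' => exact QP2_coeff0 p C' (l' ++ [B])
      rw [h2, ih B]
      simp [List.map_cons, List.prod_cons]
      ring

lemma QP2_coeffTop (p : ℝ) : ∀ (l : List Mat) (B : Mat),
    (QP p (l ++ [B])).2.coeff (l.length + 1)
      = (l.map fun M => (starRingEnd ℂ) (αM M)).prod *
          ((starRingEnd ℂ) (αM B) * Complex.exp (-(p:ℂ) * Complex.I)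
            + (starRingEnd ℂ) (βM B) * Complex.exp ((p:ℂ) * Complex.I)) := by
  intro l
  induction l with
  | nil =>
      intro B
      simp only [List.nil_append, List.length_nil, List.map_nil, List.prod_nil, one_mul]
      simp [QP, Polynomial.coeff_X_mul, Polynomial.coeff_C_mul]
  | cons B' l ih =>
      intro B
      have : (B' :: l) ++ [B] = B' :: (l ++ [B]) := rfl
      rw [this]
      have hlen : (B' :: l).length + 1 = (l.length + 1) + 1 := by simp
      rw [hlen]
      simp only [QP, Polynomial.coeff_X_mul, Polynomial.coeff_add, Polynomial.coeff_C_mul]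
      have h1 : (QP p (l ++ [B])).1.coeff (l.length + 1) = 0 :=
        (QP_coeff_hi p (l ++ [B]) (l.length + 1)).1 (by simp) (by omega)
      rw [h1, ih B]
      simp [List.map_cons, List.prod_cons]
      ring

lemma αM_ne_zero {B : Mat} (h : B.det = 1) : αM B ≠ 0 := by
  intro h0
  have := normSq_αβ B
  rw [h0, h] at this
  simp at this
  nlinarith [Complex.normSq_nonneg (βM B), this]

lemma mulvec_ne (B : Mat) (h : B.det = 1) (p : ℝ) :
    αM B * Complex.exp (p * Complex.I) + βM B * Complex.exp (-(p:ℂ) * Complex.I) ≠ 0 := by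
  intro h0
  have h1 : ‖αM B * Complex.exp (p * Complex.I)‖
      = ‖βM B * Complex.exp (-(p:ℂ) * Complex.I)‖ := by
    have : αM B * Complex.exp (p * Complex.I) = -(βM B * Complex.exp (-(p:ℂ) * Complex.I)) := by
      linear_combination h0
    rw [this, norm_neg]
  have he1 : ‖Complex.exp ((p:ℂ) * Complex.I)‖ = 1 := by
    rw [Complex.norm_exp]; simp
  have he2 : ‖Complex.exp (-(p:ℂ) * Complex.I)‖ = 1 := by
    rw [Complex.norm_exp]
    rw [show (-(p:ℂ) * Complex.I) = ((-p : ℝ):ℂ) * Complex.I by push_cast; ring]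
    simp
  rw [norm_mul, norm_mul, he1, he2, mul_one, mul_one] at h1
  have h2 : Complex.normSq (αM B) = Complex.normSq (βM B) := by
    rw [← Complex.sq_norm, ← Complex.sq_norm, h1]
  have := normSq_αβ B
  rw [h2, h] at this
  simp at this

def lfr {n : ℕ} (A : Fin (n+1) → Mat) : List Mat := List.ofFn fun i : Fin n => A i.castSucc

def cvv {n : ℕ} (A : Fin (n+1) → Mat) (p : ℝ) : ℂ :=
  ((lfr A).map αM).prod * (αM (A (Fin.last n)) * Complex.exp (p * Complex.I)
    + βM (A (Fin.last n)) * Complex.exp (-(p:ℂ) * Complex.I))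

lemma cvv_ne {n : ℕ} (A : Fin (n+1) → Mat) (hdet : ∀ i, (A i).det = 1) (p : ℝ) :
    cvv A p ≠ 0 := by
  apply mul_ne_zero
  · apply List.prod_ne_zero
    intro hz
    rw [List.mem_map] at hz
    obtain ⟨B, hB, hB0⟩ := hz
    rw [lfr, List.mem_ofFn] at hB
    obtain ⟨i, rfl⟩ := hB
    exact αM_ne_zero (hdet _) hB0
  · exact mulvec_ne _ (hdet _) p

lemma key_identity (n : ℕ) (A : Fin (n+1) → Mat) (hdet : ∀ i, (A i).det = 1) (p : ℝ)
    (θf : Fin (n+1) → ℝ)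
    (hfix : ∀ j, parr ((Wp (θf j) (List.ofFn A)).mulVec (vec p)) p)
    (hdist : ∀ i j, i ≠ j → ∀ k : ℤ, θf i ≠ θf j + k * π) :
    Complex.exp (-2 * ((∑ j, θf j : ℝ):ℂ) * Complex.I) * (starRingEnd ℂ) (cvv A p)
      = (-1:ℂ)^n * Complex.exp (-2 * (p:ℂ) * Complex.I) * cvv A p := by
  classical
  set l := List.ofFn A with hldef
  have hlsplit : l = lfr A ++ [A (Fin.last n)] := by
    rw [hldef, List.ofFn_succ', List.concat_eq_append, lfr]
  have hlfrlen : (lfr A).length = n := by simp [lfr]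
  have hllen : l.length = n + 1 := by simp [hldef]
  set g : Polynomial ℂ := C (Complex.exp (-(p:ℂ) * Complex.I)) * (QP p l).1
      - C (Complex.exp ((p:ℂ) * Complex.I)) * (QP p l).2 with hgdef
  -- roots
  have hroot : ∀ j, g.eval (Complex.exp (-2 * ((θf j : ℝ):ℂ) * Complex.I)) = 0 := by
    intro j
    obtain ⟨h1, h2⟩ := QP_eval p l (θf j)
    have hp := (parr_iff _ p).mp (hfix j)
    have hmul : Complex.exp ((l.length : ℂ) * (θf j) * Complex.I)
        * g.eval (Complex.exp (-2 * ((θf j : ℝ):ℂ) * Complex.I)) = 0 := by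
      rw [hgdef]
      simp only [Polynomial.eval_sub, Polynomial.eval_mul, Polynomial.eval_C]
      linear_combination hp - Complex.exp (-(p:ℂ)*Complex.I) * h1
        + Complex.exp ((p:ℂ)*Complex.I) * h2
    rcases mul_eq_zero.mp hmul with h | h
    · exact absurd h (Complex.exp_ne_zero _)
    · exact h
  -- coefficients
  have hc0 : g.coeff 0 = Complex.exp (-(p:ℂ) * Complex.I) * cvv A p := by
    have hQ2 : (QP p l).2.coeff 0 = 0 := by
      rw [hldef, List.ofFn_succ]
      exact QP2_coeff0 p _ _
    have hQ1 : (QP p l).1.coeff 0 = cvv A p := by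
      rw [hlsplit, QP1_coeff0, cvv]
    rw [hgdef]
    simp only [Polynomial.coeff_sub, Polynomial.mul_coeff_zero, Polynomial.coeff_C_zero]
    rw [hQ1, hQ2]
    ring
  have hctop : g.coeff (n+1)
      = -(Complex.exp ((p:ℂ) * Complex.I)) * (starRingEnd ℂ) (cvv A p) := by
    have hQ1 : (QP p l).1.coeff (n+1) = 0 :=
      (QP_coeff_hi p l (n+1)).1 (by omega) (by omega)
    have hQ2 : (QP p l).2.coeff (n+1) = (starRingEnd ℂ) (cvv A p) := by
      rw [hlsplit]
      have := QP2_coeffTop p (lfr A) (A (Fin.last n))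
      rw [hlfrlen] at this
      rw [this, cvv]
      simp only [_root_.map_mul, _root_.map_add]
      rw [conj_exp_mul_I p, conj_exp_neg p]
      congr 1
      rw [map_list_prod (starRingEnd ℂ), List.map_map]
      rfl
    rw [hgdef]
    simp only [Polynomial.coeff_sub, Polynomial.coeff_C_mul]
    rw [hQ1, hQ2]
    ring
  have hcvne : cvv A p ≠ 0 := cvv_ne A hdet p
  have hconjne : (starRingEnd ℂ) (cvv A p) ≠ 0 := by
    simpa using hcvne
  have hctopne : g.coeff (n+1) ≠ 0 := by
    rw [hctop]
    exact mul_ne_zero (neg_ne_zero.mpr (Complex.exp_ne_zero _)) hconjne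
  have hgne : g ≠ 0 := fun h => hctopne (by rw [h]; simp)
  have hdeg : g.natDegree ≤ n + 1 := by
    rw [Polynomial.natDegree_le_iff_coeff_eq_zero]
    intro N hN
    rw [hgdef]
    simp only [Polynomial.coeff_sub, Polynomial.coeff_C_mul]
    rw [(QP_coeff_hi p l N).1 (by omega) (by omega), (QP_coeff_hi p l N).2 (by omega)]
    ring
  -- the root multiset
  set M : Multiset ℂ :=
    Finset.univ.val.map (fun j : Fin (n+1) => Complex.exp (-2 * ((θf j : ℝ):ℂ) * Complex.I))
    with hMdef
  have hMnodup : M.Nodup := by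
    apply Multiset.Nodup.map_on _ Finset.univ.nodup
    intro i _ j _ hij
    by_contra hne
    rw [Complex.exp_eq_exp_iff_exists_int] at hij
    obtain ⟨k, hk⟩ := hij
    have h1 : ((-2:ℂ) * (θf i)) * Complex.I
        = ((-2:ℂ) * ((θf j : ℂ) + ((-k : ℤ):ℂ) * (π:ℂ))) * Complex.I := by
      push_cast
      linear_combination hk
    have h2 := mul_right_cancel₀ Complex.I_ne_zero h1
    have h3 : ((θf i : ℝ):ℂ) = ((θf j + (-k : ℤ) * π : ℝ):ℂ) := by
      push_cast at h2 ⊢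
      linear_combination (-1/2 : ℂ) * h2
    exact hdist i j hne (-k) (Complex.ofReal_injective h3)
  have hMcard : Multiset.card M = n + 1 := by simp [hMdef]
  have hMsub : M ⊆ g.roots := by
    intro x hx
    rw [hMdef, Multiset.mem_map] at hx
    obtain ⟨j, _, rfl⟩ := hx
    rw [Polynomial.mem_roots hgne]
    exact hroot j
  have hMle : M ≤ g.roots := (Multiset.le_iff_subset hMnodup).mpr hMsub
  have hrcard : Multiset.card g.roots ≤ n + 1 := le_trans (Polynomial.card_roots' g) hdeg
  have hMeq : M = g.roots := Multiset.eq_of_le_of_card_le hMle (by omega)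
  have hndeg : g.natDegree = n + 1 := by
    have := Polynomial.card_roots' g
    rw [← hMeq, hMcard] at this
    omega
  have hlc : g.leadingCoeff = g.coeff (n+1) := by
    rw [Polynomial.leadingCoeff, hndeg]
  have hsplit : g = C g.leadingCoeff * (g.roots.map fun a => X - C a).prod :=
    (IsAlgClosed.splits g).eq_prod_roots
  -- evaluate at 0
  have heval : g.coeff 0 = g.leadingCoeff *
      ((-1:ℂ)^(n+1) * Complex.exp (-2 * ((∑ j, θf j : ℝ):ℂ) * Complex.I)) := by
    rw [Polynomial.coeff_zero_eq_eval_zero]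
    conv_lhs => rw [hsplit]
    rw [Polynomial.eval_mul, Polynomial.eval_C, Polynomial.eval_multiset_prod]
    congr 1
    rw [← hMeq, hMdef, Multiset.map_map, Multiset.map_map]
    simp only [Function.comp_def, Polynomial.eval_sub, Polynomial.eval_X,
      Polynomial.eval_C, zero_sub]
    have hfin : (Finset.univ.val.map fun j : Fin (n+1) =>
        -Complex.exp (-2 * ((θf j : ℝ):ℂ) * Complex.I)).prod
        = ∏ j : Fin (n+1), (-Complex.exp (-2 * ((θf j : ℝ):ℂ) * Complex.I)) := rfl
    rw [hfin]
    have hneg : ∀ j : Fin (n+1), -Complex.exp (-2 * ((θf j : ℝ):ℂ) * Complex.I)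
        = (-1:ℂ) * Complex.exp (-2 * ((θf j : ℝ):ℂ) * Complex.I) := fun j => by ring
    rw [Finset.prod_congr rfl fun j _ => hneg j,
      Finset.prod_mul_distrib, Finset.prod_const, ← Complex.exp_sum]
    congr 2
    · simp
    · push_cast [Finset.mul_sum, Finset.sum_mul]
      apply Finset.sum_congr rfl
      intro j _; ring
  rw [hc0, hlc, hctop] at heval
  have hepne : Complex.exp (-(p:ℂ) * Complex.I) ≠ 0 := Complex.exp_ne_zero _
  have hexp2 : Complex.exp ((p:ℂ) * Complex.I) * Complex.exp (-(p:ℂ) * Complex.I) = 1 := by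
    rw [← Complex.exp_add]; simp
  have hexp3 : Complex.exp (-2 * (p:ℂ) * Complex.I)
      = Complex.exp (-(p:ℂ) * Complex.I) * Complex.exp (-(p:ℂ) * Complex.I) := by
    rw [← Complex.exp_add]; congr 1; ring
  have hsgn : (-1:ℂ)^(n+1) = -((-1:ℂ)^n) := by rw [pow_succ]; ring
  rw [hsgn] at heval
  rw [hexp3]
  have hσ : ((-1:ℂ)^n) * ((-1:ℂ)^n) = 1 := by
    rw [← pow_add]; exact Even.neg_one_pow ⟨n, rfl⟩
  linear_combination (-(((-1:ℂ)^n) * Complex.exp (-(p:ℂ) * Complex.I))) * heval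
    + (-(((-1:ℂ)^n) * ((-1:ℂ)^n) * Complex.exp (-2 * ((∑ j, θf j : ℝ):ℂ) * Complex.I)
        * (starRingEnd ℂ) (cvv A p))) * hexp2
    + (-(Complex.exp (-2 * ((∑ j, θf j : ℝ):ℂ) * Complex.I)
        * (starRingEnd ℂ) (cvv A p))) * hσ

lemma en_sq (w : Fin 2 → ℝ) : en w ^ 2 = Complex.normSq (cx w) := by
  rw [en, Real.sq_sqrt (by positivity)]
  simp [Complex.normSq_apply, cx]; ring

lemma hasDerivAt_expI (x : ℝ) :
    HasDerivAt (fun p : ℝ => Complex.exp ((p:ℂ) * Complex.I))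
      (Complex.I * Complex.exp ((x:ℂ) * Complex.I)) x := by
  have h0 : HasDerivAt (fun p : ℝ => ((p:ℝ):ℂ)) 1 x := (hasDerivAt_id x).ofReal_comp
  have h1 : HasDerivAt (fun p : ℝ => ((p:ℂ) * Complex.I)) Complex.I x := by
    simpa using h0.mul_const Complex.I
  simpa [mul_comm] using h1.cexp

lemma hasDerivAt_expnI (x : ℝ) :
    HasDerivAt (fun p : ℝ => Complex.exp (-(p:ℂ) * Complex.I))
      (-Complex.I * Complex.exp (-(x:ℂ) * Complex.I)) x := by
  have h0 : HasDerivAt (fun p : ℝ => ((p:ℝ):ℂ)) 1 x := (hasDerivAt_id x).ofReal_comp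
  have h1 : HasDerivAt (fun p : ℝ => (-(p:ℂ) * Complex.I)) (-Complex.I) x := by
    simpa using (h0.neg).mul_const Complex.I
  simpa [mul_comm] using h1.cexp


/-- The sum of the derivatives of the implicit functions `H̃ⱼ` equals
`1 - Φ_{Aₙ}'(p) = 1 - 1/‖Aₙ v_p‖²`. -/
theorem stmt13 (n : ℕ) (A : Fin (n+1) → Mat) (hdet : ∀ i, (A i).det = 1)
    (Htil : Fin (n+1) → ℝ → ℝ)
    (hdiff : ∀ j, Differentiable ℝ (Htil j))
    (hfix : ∀ j (p : ℝ), parr ((Wp (Htil j p) (List.ofFn A)).mulVec (vec p)) p)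
    (hdist : ∀ (p : ℝ) (i j : Fin (n+1)), i ≠ j → ∀ k : ℤ, Htil i p ≠ Htil j p + k * π) :
    ∀ p : ℝ, ∑ j : Fin (n+1), deriv (Htil j) p
      = 1 - 1 / en ((A (Fin.last n)).mulVec (vec p)) ^ 2 := by
  intro p₀
  classical
  set K : ℂ := ((lfr A).map αM).prod with hK
  set aL : ℂ := αM (A (Fin.last n)) with haL
  set bL : ℂ := βM (A (Fin.last n)) with hbL
  set Ka : ℂ := K * aL with hKa
  set Kb : ℂ := K * bL with hKb
  set S : ℝ → ℝ := fun p => ∑ j, Htil j p with hSdef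
  -- the pointwise identity from `key_identity`
  have hid : ∀ p : ℝ,
      Complex.exp (-2 * ((S p : ℝ):ℂ) * Complex.I) *
        ((starRingEnd ℂ) Ka * Complex.exp (-(p:ℂ) * Complex.I)
          + (starRingEnd ℂ) Kb * Complex.exp ((p:ℂ) * Complex.I))
      = (-1:ℂ)^n * Complex.exp (-2 * (p:ℂ) * Complex.I) *
        (Ka * Complex.exp ((p:ℂ) * Complex.I) + Kb * Complex.exp (-(p:ℂ) * Complex.I)) := by
    intro p
    have h := key_identity n A hdet p (fun j => Htil j p) (fun j => hfix j p)
      (fun i j hij k => hdist p i j hij k)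
    have hcv : cvv A p = Ka * Complex.exp ((p:ℂ) * Complex.I)
        + Kb * Complex.exp (-(p:ℂ) * Complex.I) := by
      rw [cvv, hKa, hKb, haL, hbL, hK]; ring
    have hconj : (starRingEnd ℂ) (cvv A p)
        = (starRingEnd ℂ) Ka * Complex.exp (-(p:ℂ) * Complex.I)
          + (starRingEnd ℂ) Kb * Complex.exp ((p:ℂ) * Complex.I) := by
      rw [hcv]
      simp only [map_add, _root_.map_mul, conj_exp_mul_I, conj_exp_neg]
    rw [hconj, hcv] at h
    exact h
  -- derivatives
  set S' : ℝ := ∑ j, deriv (Htil j) p₀ with hS'def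
  have hSder : HasDerivAt S S' p₀ := by
    rw [hS'def]
    exact HasDerivAt.fun_sum fun j _ => ((hdiff j) p₀).hasDerivAt
  have hEd := hasDerivAt_expI p₀
  have hFd := hasDerivAt_expnI p₀
  have hUd : HasDerivAt (fun p : ℝ => Complex.exp (-2 * ((S p : ℝ):ℂ) * Complex.I))
      (Complex.exp (-2 * ((S p₀ : ℝ):ℂ) * Complex.I) * (-2 * (S' : ℂ) * Complex.I)) p₀ := by
    have h0 : HasDerivAt (fun p : ℝ => ((S p : ℝ):ℂ)) (S' : ℂ) p₀ := hSder.ofReal_comp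
    have h1 : HasDerivAt (fun p : ℝ => -2 * ((S p : ℝ):ℂ) * Complex.I)
        (-2 * (S':ℂ) * Complex.I) p₀ := by
      simpa using (h0.const_mul (-2:ℂ)).mul_const Complex.I
    simpa using h1.cexp
  have hE2d : HasDerivAt (fun p : ℝ => Complex.exp (-2 * (p:ℂ) * Complex.I))
      (Complex.exp (-2*(p₀:ℂ)*Complex.I) * (-2*Complex.I)) p₀ := by
    have h0 : HasDerivAt (fun p : ℝ => ((p:ℝ):ℂ)) 1 p₀ := (hasDerivAt_id p₀).ofReal_comp
    have h1 : HasDerivAt (fun p : ℝ => -2*(p:ℂ)*Complex.I) (-2*Complex.I) p₀ := by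
      simpa using (h0.const_mul (-2:ℂ)).mul_const Complex.I
    simpa using h1.cexp
  have hLd : HasDerivAt (fun p : ℝ => Complex.exp (-2 * ((S p : ℝ):ℂ) * Complex.I) *
        ((starRingEnd ℂ) Ka * Complex.exp (-(p:ℂ) * Complex.I)
          + (starRingEnd ℂ) Kb * Complex.exp ((p:ℂ) * Complex.I)))
      (Complex.exp (-2 * ((S p₀ : ℝ):ℂ) * Complex.I) * (-2 * (S' : ℂ) * Complex.I) *
        ((starRingEnd ℂ) Ka * Complex.exp (-(p₀:ℂ) * Complex.I)
          + (starRingEnd ℂ) Kb * Complex.exp ((p₀:ℂ) * Complex.I))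
        + Complex.exp (-2 * ((S p₀ : ℝ):ℂ) * Complex.I) *
          ((starRingEnd ℂ) Ka * (-Complex.I * Complex.exp (-(p₀:ℂ) * Complex.I))
            + (starRingEnd ℂ) Kb * (Complex.I * Complex.exp ((p₀:ℂ) * Complex.I)))) p₀ :=
    hUd.mul ((hFd.const_mul ((starRingEnd ℂ) Ka)).add (hEd.const_mul ((starRingEnd ℂ) Kb)))
  have hRd : HasDerivAt (fun p : ℝ => (-1:ℂ)^n * Complex.exp (-2*(p:ℂ)*Complex.I) *
        (Ka * Complex.exp ((p:ℂ) * Complex.I) + Kb * Complex.exp (-(p:ℂ) * Complex.I)))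
      ((-1:ℂ)^n * (Complex.exp (-2*(p₀:ℂ)*Complex.I) * (-2*Complex.I)) *
        (Ka * Complex.exp ((p₀:ℂ) * Complex.I) + Kb * Complex.exp (-(p₀:ℂ) * Complex.I))
        + (-1:ℂ)^n * Complex.exp (-2*(p₀:ℂ)*Complex.I) *
          (Ka * (Complex.I * Complex.exp ((p₀:ℂ) * Complex.I))
            + Kb * (-Complex.I * Complex.exp (-(p₀:ℂ) * Complex.I)))) p₀ := by
    exact ((hE2d.const_mul ((-1:ℂ)^n)).mul
      ((hEd.const_mul Ka).add (hFd.const_mul Kb)))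
  have hfuneq : (fun p : ℝ => Complex.exp (-2 * ((S p : ℝ):ℂ) * Complex.I) *
        ((starRingEnd ℂ) Ka * Complex.exp (-(p:ℂ) * Complex.I)
          + (starRingEnd ℂ) Kb * Complex.exp ((p:ℂ) * Complex.I)))
      = (fun p : ℝ => (-1:ℂ)^n * Complex.exp (-2*(p:ℂ)*Complex.I) *
        (Ka * Complex.exp ((p:ℂ) * Complex.I) + Kb * Complex.exp (-(p:ℂ) * Complex.I))) :=
    funext hid
  rw [hfuneq] at hLd
  have hDeq := hLd.unique hRd
  -- notation
  set e : ℂ := Complex.exp ((p₀:ℂ) * Complex.I) with he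
  set f : ℂ := Complex.exp (-(p₀:ℂ) * Complex.I) with hf
  set u : ℂ := Complex.exp (-2 * ((S p₀ : ℝ):ℂ) * Complex.I) with hu
  set g2 : ℂ := Complex.exp (-2*(p₀:ℂ)*Complex.I) with hg2
  set σ : ℂ := (-1:ℂ)^n with hσdef
  set c0 : ℂ := Ka * e + Kb * f with hc0def
  set t0 : ℂ := (starRingEnd ℂ) Ka * f + (starRingEnd ℂ) Kb * e with ht0def
  set dc0 : ℂ := Ka * (Complex.I * e) + Kb * (-Complex.I * f) with hdc0def
  set dt0 : ℂ := (starRingEnd ℂ) Ka * (-Complex.I * f) + (starRingEnd ℂ) Kb * (Complex.I * e)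
    with hdt0def
  have hid₀ : u * t0 = σ * g2 * c0 := hid p₀
  have hef : e * f = 1 := by rw [he, hf, ← Complex.exp_add]; simp
  have hσne : σ ≠ 0 := by
    rw [hσdef]; exact pow_ne_zero _ (by norm_num)
  have hg2ne : g2 ≠ 0 := Complex.exp_ne_zero _
  -- the derivative equation
  have hDeq' : u * (-2*(S':ℂ)*Complex.I) * t0 + u * dt0
      = σ * (g2 * (-2*Complex.I)) * c0 + σ * g2 * dc0 := by
    linear_combination hDeq
  have hEq3 : σ * g2 * (c0 * ((-2*(S':ℂ)*Complex.I) * t0 + dt0))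
      = σ * g2 * ((-2*Complex.I) * c0 * t0 + dc0 * t0) := by
    linear_combination t0 * hDeq' - ((-2*(S':ℂ)*Complex.I) * t0 + dt0) * hid₀
  have hEq4 : c0 * ((-2*(S':ℂ)*Complex.I) * t0 + dt0)
      = (-2*Complex.I) * c0 * t0 + dc0 * t0 :=
    mul_left_cancel₀ (mul_ne_zero hσne hg2ne) hEq3
  -- conjugation relations
  have hconje : (starRingEnd ℂ) e = f := by rw [he, hf]; exact conj_exp_mul_I p₀
  have hconjf : (starRingEnd ℂ) f = e := by rw [he, hf]; exact conj_exp_neg p₀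
  have ht0conj : t0 = (starRingEnd ℂ) c0 := by
    rw [ht0def, hc0def]
    simp only [map_add, _root_.map_mul, hconje, hconjf]
  have hdt0conj : dt0 = (starRingEnd ℂ) dc0 := by
    rw [hdt0def, hdc0def]
    simp only [map_add, _root_.map_mul, hconje, hconjf, map_neg, Complex.conj_I]
    ring
  have hN0 : c0 * t0 = ((Complex.normSq c0 : ℝ):ℂ) := by
    rw [ht0conj, Complex.mul_conj]
  have hcW : c0 * dt0 = (starRingEnd ℂ) (dc0 * t0) := by
    rw [hdt0conj, ht0conj, _root_.map_mul, Complex.conj_conj, mul_comm]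
  have hEq6 : (-2*(S':ℂ)*Complex.I) * ((Complex.normSq c0 : ℝ):ℂ)
        + (starRingEnd ℂ) (dc0 * t0)
      = (-2*Complex.I) * ((Complex.normSq c0 : ℝ):ℂ) + dc0 * t0 := by
    linear_combination hEq4 - (-2*(S':ℂ)*Complex.I) * hN0 - (2*Complex.I) * hN0 - hcW
  -- imaginary part
  have R1 : -2 * S' * Complex.normSq c0 - (dc0 * t0).im
      = -2 * Complex.normSq c0 + (dc0 * t0).im := by
    have h := congrArg Complex.im hEq6
    simp only [Complex.add_im, Complex.mul_im, Complex.mul_re, Complex.ofReal_re,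
      Complex.ofReal_im, Complex.conj_im, Complex.conj_re, Complex.I_re, Complex.I_im,
      Complex.neg_re, Complex.neg_im, Complex.re_ofNat, Complex.im_ofNat] at h
    have hmm : (dc0*t0).im = dc0.re*t0.im + dc0.im*t0.re := Complex.mul_im _ _
    nlinarith [h, hmm]
  -- compute the imaginary part of W = dc0 * t0
  have h1 : Ka * (starRingEnd ℂ) Ka = ((Complex.normSq Ka : ℝ):ℂ) := Complex.mul_conj Ka
  have h2 : Kb * (starRingEnd ℂ) Kb = ((Complex.normSq Kb : ℝ):ℂ) := Complex.mul_conj Kb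
  have h3 : (starRingEnd ℂ) (Ka * (starRingEnd ℂ) Kb * e^2)
      = (starRingEnd ℂ) Ka * Kb * f^2 := by
    simp only [_root_.map_mul, map_pow, Complex.conj_conj, hconje]
  have hWval : dc0 * t0 = Complex.I *
      (((Complex.normSq Ka - Complex.normSq Kb : ℝ):ℂ)
        + (Ka * (starRingEnd ℂ) Kb * e^2 - (starRingEnd ℂ) (Ka * (starRingEnd ℂ) Kb * e^2))) := by
    rw [hdc0def, ht0def]
    push_cast
    linear_combination (Complex.I * Ka * (starRingEnd ℂ) Ka) * hef
      - (Complex.I * Kb * (starRingEnd ℂ) Kb) * hef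
      + Complex.I * h1 - Complex.I * h2 + Complex.I * h3
  have hWim : (dc0 * t0).im = Complex.normSq Ka - Complex.normSq Kb := by
    rw [hWval, Complex.I_mul_im, Complex.add_re, Complex.sub_re, Complex.conj_re,
      Complex.ofReal_re]
    ring
  have hKdet : Complex.normSq Ka - Complex.normSq Kb = Complex.normSq K := by
    rw [hKa, hKb, Complex.normSq_mul, Complex.normSq_mul, haL, hbL]
    have h := normSq_αβ (A (Fin.last n))
    rw [hdet (Fin.last n)] at h
    linear_combination (Complex.normSq K) * h
  -- norm of c0
  have hcxw : cx ((A (Fin.last n)).mulVec (vec p₀)) = aL * e + bL * f := by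
    rw [cx_mulVec, cx_vec, haL, hbL, he, hf, conj_exp_mul_I]
  have hN : en ((A (Fin.last n)).mulVec (vec p₀)) ^ 2 = Complex.normSq (aL * e + bL * f) := by
    rw [en_sq, hcxw]
  have hc0K : c0 = K * (aL * e + bL * f) := by rw [hc0def, hKa, hKb]; ring
  have hNc0 : Complex.normSq c0 = Complex.normSq K * Complex.normSq (aL * e + bL * f) := by
    rw [hc0K, Complex.normSq_mul]
  have hvne : aL * e + bL * f ≠ 0 := by
    rw [haL, hbL, he, hf]; exact mulvec_ne _ (hdet _) p₀
  have hNne : Complex.normSq (aL * e + bL * f) ≠ 0 := by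
    simpa [Complex.normSq_eq_zero] using hvne
  have hKne : K ≠ 0 := by
    have := cvv_ne A hdet p₀
    rw [cvv] at this
    exact left_ne_zero_of_mul this
  have hnormKne : Complex.normSq K ≠ 0 := by simpa [Complex.normSq_eq_zero] using hKne
  -- final arithmetic
  rw [hWim, hKdet, hNc0] at R1
  have hfin : S' * Complex.normSq (aL * e + bL * f)
      = Complex.normSq (aL * e + bL * f) - 1 := by
    apply mul_left_cancel₀ hnormKne
    linear_combination (-1/2 : ℝ) * R1
  rw [hN]
  field_simp [hNne]
  linear_combination hfin
end
end
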